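/- arXiv:1505.00220 — 10 statements merged into one kernel-verified Lean document; each statement's English description precedes it below -/
import Mathlib

section
/- Let C be a symmetric monoidal category (with tensor unit k) equipped with an algebra modality (T, μ, η, m, e). For every T-algebra (A, ν), the morphisms m_A = (η_A ⊗ η_A);m_{TA};ν : A ⊗ A → A and e_A = e_A;ν : k → A make A a commutative algebra in C; moreover every morphism of T-algebras is an algebra homomorphism for these structures, so this assignment defines a functor from the category of T-algebras to the category of commutative algebras in C. Applied to the free T-algebra (TA, μ_A), this construction returns the original commutative algebra (TA, m, e). -/
open CategoryTheory CategoryTheory.Limits CategoryTheory.MonoidalCategory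

universe v u

namespace CodiffPaper

/-- A category enriched in commutative monoids: each hom-set is a commutative
monoid and composition is biadditive (and preserves zero). -/
class CMonEnriched (C : Type u) [Category.{v} C] where
  [homMonoid : ∀ X Y : C, AddCommMonoid (X ⟶ Y)]
  add_comp : ∀ {X Y Z : C} (f g : X ⟶ Y) (h : Y ⟶ Z), (f + g) ≫ h = f ≫ h + g ≫ h
  comp_add : ∀ {X Y Z : C} (f : X ⟶ Y) (g h : Y ⟶ Z), f ≫ (g + h) = f ≫ g + f ≫ h
  zero_comp : ∀ {X Y Z : C} (f : Y ⟶ Z), (0 : X ⟶ Y) ≫ f = (0 : X ⟶ Z)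
  comp_zero : ∀ {X Y Z : C} (f : X ⟶ Y), f ≫ (0 : Y ⟶ Z) = (0 : X ⟶ Z)

attribute [instance] CMonEnriched.homMonoid

instance (priority := 100) CMonEnriched.toHasZeroMorphisms
    (C : Type u) [Category.{v} C] [CMonEnriched C] : HasZeroMorphisms C where
  zero X Y := inferInstance
  comp_zero := fun {X Y} f Z => CMonEnriched.comp_zero f
  zero_comp := fun X {Y Z} f => CMonEnriched.zero_comp f

/-- An additive symmetric monoidal category: commutative-monoid enriched, and
the tensor product is additive in each variable. -/
class AdditiveMonoidal (C : Type u) [Category.{v} C] [MonoidalCategory C] extends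
    CMonEnriched C where
  add_tensorHom : ∀ {X Y Z W : C} (f g : X ⟶ Y) (h : Z ⟶ W),
    (f + g) ⊗ₘ h = (f ⊗ₘ h) + (g ⊗ₘ h)
  tensorHom_add : ∀ {X Y Z W : C} (f : X ⟶ Y) (g h : Z ⟶ W),
    f ⊗ₘ (g + h) = (f ⊗ₘ g) + (f ⊗ₘ h)
  zero_tensorHom : ∀ {X Y Z W : C} (h : Z ⟶ W), (0 : X ⟶ Y) ⊗ₘ h = 0
  tensorHom_zero : ∀ {X Y Z W : C} (f : X ⟶ Y), f ⊗ₘ (0 : Z ⟶ W) = 0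

variable {C : Type u} [Category.{v} C]

/-- `π : Y ⟶ Q` is a coequalizer of `f` and `g` (elementwise formulation). -/
def IsCoeq {X Y Q : C} (f g : X ⟶ Y) (π : Y ⟶ Q) : Prop :=
  f ≫ π = g ≫ π ∧ ∀ {Z : C} (h : Y ⟶ Z), f ≫ h = g ≫ h → ∃! t : Q ⟶ Z, π ≫ t = h

/-- The tensor product preserves reflexive coequalizers in each variable. -/
def TensorPreservesReflCoeq (C : Type u) [Category.{v} C] [MonoidalCategory C] : Prop :=
  ∀ {X Y Q : C} (f g : X ⟶ Y) (s : Y ⟶ X) (π : Y ⟶ Q),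
    s ≫ f = 𝟙 Y → s ≫ g = 𝟙 Y → IsCoeq f g π →
      ∀ Z : C, IsCoeq (Z ◁ f) (Z ◁ g) (Z ◁ π) ∧ IsCoeq (f ▷ Z) (g ▷ Z) (π ▷ Z)

section Monoidal

variable [MonoidalCategory C]

/-- A commutative algebra (commutative monoid object) structure. -/
structure IsCommAlg [SymmetricCategory C] {A : C} (mul : A ⊗ A ⟶ A) (unit : 𝟙_ C ⟶ A) : Prop where
  one_mul : (unit ▷ A) ≫ mul = (λ_ A).hom
  mul_one : (A ◁ unit) ≫ mul = (ρ_ A).hom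
  mul_assoc : (mul ▷ A) ≫ mul = (α_ A A A).hom ≫ (A ◁ mul) ≫ mul
  mul_comm : (β_ A A).hom ≫ mul = mul

/-- `f : A ⟶ B` is a homomorphism of algebras. -/
structure IsAlgHom {A B : C} (mulA : A ⊗ A ⟶ A) (unitA : 𝟙_ C ⟶ A)
    (mulB : B ⊗ B ⟶ B) (unitB : 𝟙_ C ⟶ B) (f : A ⟶ B) : Prop where
  map_mul : (f ⊗ₘ f) ≫ mulB = mulA ≫ f
  map_one : unitA ≫ f = unitB

/-- `act : A ⊗ M ⟶ M` is a module structure on `M` over the algebra `(A, mulA, unitA)`. -/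
structure IsModule {A M : C} (mulA : A ⊗ A ⟶ A) (unitA : 𝟙_ C ⟶ A)
    (act : A ⊗ M ⟶ M) : Prop where
  one_act : (unitA ▷ M) ≫ act = (λ_ M).hom
  mul_act : (mulA ▷ M) ≫ act = (α_ A A M).hom ≫ (A ◁ act) ≫ act

/-- A morphism of modules over `A` (a linear map). -/
def IsModuleMap {A M N : C} (actM : A ⊗ M ⟶ M) (actN : A ⊗ N ⟶ N) (h : M ⟶ N) : Prop :=
  actM ≫ h = (A ◁ h) ≫ actN

/-- The free `A`-module structure on `A ⊗ X`. -/
def freeAct {A : C} (mulA : A ⊗ A ⟶ A) (X : C) : A ⊗ (A ⊗ X) ⟶ A ⊗ X :=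
  (α_ A A X).inv ≫ (mulA ▷ X)

/-- `der : A ⟶ M` is a derivation from the algebra `(A, mulA, unitA)` to the module
`(M, act)`:  `m;der = c;(1⊗der);• + (1⊗der);•` and `e;der = 0`. -/
def IsDerivation [SymmetricCategory C] [CMonEnriched C] {A M : C}
    (mulA : A ⊗ A ⟶ A) (unitA : 𝟙_ C ⟶ A) (act : A ⊗ M ⟶ M) (der : A ⟶ M) : Prop :=
  (mulA ≫ der = (β_ A A).hom ≫ (A ◁ der) ≫ act + (A ◁ der) ≫ act) ∧ unitA ≫ der = 0

variable [SymmetricCategory C]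

/-- An algebra modality: each `T X` is naturally a commutative algebra. -/
structure IsAlgebraModality (T : Monad C)
    (mul : ∀ X : C, T.obj X ⊗ T.obj X ⟶ T.obj X)
    (unit : ∀ X : C, 𝟙_ C ⟶ T.obj X) : Prop where
  commAlg : ∀ X : C, IsCommAlg (mul X) (unit X)
  map_hom : ∀ {X Y : C} (f : X ⟶ Y),
    IsAlgHom (mul X) (unit X) (mul Y) (unit Y) (T.map f)
  mu_hom : ∀ X : C,
    IsAlgHom (mul (T.obj X)) (unit (T.obj X)) (mul X) (unit X) (T.μ.app X)

/-- A (bundled) algebra modality on `C`. -/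
structure AlgebraModality (C : Type u) [Category.{v} C] [MonoidalCategory C]
    [SymmetricCategory C] where
  T : Monad C
  mul : ∀ X : C, T.obj X ⊗ T.obj X ⟶ T.obj X
  unit : ∀ X : C, 𝟙_ C ⟶ T.obj X
  ismod : IsAlgebraModality T mul unit

/-- The multiplication of the commutative algebra induced on a `T`-algebra. -/
def algMul (Φ : AlgebraModality C) (A : Φ.T.Algebra) : A.A ⊗ A.A ⟶ A.A :=
  (Φ.T.η.app A.A ⊗ₘ Φ.T.η.app A.A) ≫ Φ.mul A.A ≫ A.a

/-- The unit of the commutative algebra induced on a `T`-algebra. -/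
def algUnit (Φ : AlgebraModality C) (A : Φ.T.Algebra) : 𝟙_ C ⟶ A.A :=
  Φ.unit A.A ≫ A.a

/-- `f : A ⟶ B` is a homomorphism of `T`-algebras (elementwise formulation). -/
def IsTAlgebraHom (T : Monad C) {A B : C} (νA : T.obj A ⟶ A) (νB : T.obj B ⟶ B)
    (f : A ⟶ B) : Prop :=
  T.map f ≫ νB = νA ≫ f

/-- `b : T X ⟶ X` is a `T`-algebra structure map. -/
def IsTAlgStr (T : Monad C) {X : C} (b : T.obj X ⟶ X) : Prop :=
  (T.η.app X ≫ b = 𝟙 X) ∧ (T.μ.app X ≫ b = T.map b ≫ b)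

variable [AdditiveMonoidal C]

/-- The axioms for a codifferential category on an additive symmetric monoidal
category: an algebra modality together with a deriving transform satisfying
(d1)–(d4). -/
structure IsCodifferential (T : Monad C)
    (mul : ∀ X : C, T.obj X ⊗ T.obj X ⟶ T.obj X)
    (unit : ∀ X : C, 𝟙_ C ⟶ T.obj X)
    (d : ∀ X : C, T.obj X ⟶ T.obj X ⊗ X) : Prop where
  ismod : IsAlgebraModality T mul unit
  d_natural : ∀ {X Y : C} (f : X ⟶ Y), T.map f ≫ d Y = d X ≫ (T.map f ⊗ₘ f)
  d1 : ∀ X : C, unit X ≫ d X = 0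
  d2 : ∀ X : C, mul X ≫ d X =
    (T.obj X ◁ d X) ≫ (α_ (T.obj X) (T.obj X) X).inv ≫ (mul X ▷ X)
    + (d X ▷ T.obj X) ≫ (α_ (T.obj X) X (T.obj X)).hom ≫
        (T.obj X ◁ (β_ X (T.obj X)).hom) ≫ (α_ (T.obj X) (T.obj X) X).inv ≫ (mul X ▷ X)
  d3 : ∀ X : C, T.η.app X ≫ d X = (λ_ X).inv ≫ (unit X ▷ X)
  d4 : ∀ X : C, T.μ.app X ≫ d X =
    d (T.obj X) ≫ (T.μ.app X ⊗ₘ d X) ≫ (α_ (T.obj X) (T.obj X) X).inv ≫ (mul X ▷ X)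

/-- A (bundled) codifferential category structure on `C`. -/
structure Codifferential (C : Type u) [Category.{v} C] [MonoidalCategory C]
    [SymmetricCategory C] [AdditiveMonoidal C] extends AlgebraModality C where
  d : ∀ X : C, T.obj X ⟶ T.obj X ⊗ X
  iscodiff : IsCodifferential T mul unit d

section Biproducts

variable [HasBinaryBiproducts C]

/-- The second component of the structure map of `W(A,M)`:
`β₂ = d;(Tπ₁ ⊗ π₂);(ν ⊗ 1);•`. -/
noncomputable def Wbeta2 (D : Codifferential C) (A : D.T.Algebra) {M : C} (act : A.A ⊗ M ⟶ M) :
    D.T.obj (A.A ⊞ M) ⟶ M :=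
  D.d (A.A ⊞ M) ≫ (D.T.map biprod.fst ⊗ₘ biprod.snd) ≫ (A.a ⊗ₘ 𝟙 M) ≫ act

/-- The structure map `β = ⟨β₁, β₂⟩ : T(A ⊕ M) ⟶ A ⊕ M` of `W(A,M)`. -/
noncomputable def Wbeta (D : Codifferential C) (A : D.T.Algebra) {M : C} (act : A.A ⊗ M ⟶ M) :
    D.T.obj (A.A ⊞ M) ⟶ A.A ⊞ M :=
  biprod.lift (D.T.map biprod.fst ≫ A.a) (Wbeta2 D A act)

end Biproducts

/-- A Kähler category: an additive symmetric monoidal category with an algebra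
modality such that every algebra `T X` has a module of Kähler differentials. -/
structure KahlerCategory (C : Type u) [Category.{v} C] [MonoidalCategory C]
    [SymmetricCategory C] [AdditiveMonoidal C] extends AlgebraModality C where
  Ω : C → C
  act : ∀ X : C, T.obj X ⊗ Ω X ⟶ Ω X
  ismodule : ∀ X : C, IsModule (mul X) (unit X) (act X)
  dK : ∀ X : C, T.obj X ⟶ Ω X
  isder : ∀ X : C, IsDerivation (mul X) (unit X) (act X) (dK X)
  universal : ∀ (X : C) {M : C} (actM : T.obj X ⊗ M ⟶ M),
    IsModule (mul X) (unit X) actM →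
    ∀ der : T.obj X ⟶ M, IsDerivation (mul X) (unit X) actM der →
      ∃! h : Ω X ⟶ M, IsModuleMap (act X) actM h ∧ dK X ≫ h = der

end Monoidal


section Aux
variable {C : Type u} [Category.{v} C] [MonoidalCategory C] [SymmetricCategory C]
variable (Φ : AlgebraModality C)

lemma key_mul (A : Φ.T.Algebra) :
    (A.a ⊗ₘ A.a) ≫ algMul Φ A = Φ.mul A.A ≫ A.a := by
  have hnat : A.a ≫ Φ.T.η.app A.A = Φ.T.η.app (Φ.T.obj A.A) ≫ Φ.T.map A.a :=
    by simpa using Φ.T.η.naturality A.a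
  have hmu := (Φ.ismod.mu_hom A.A).map_mul
  have hT := (Φ.ismod.map_hom A.a).map_mul
  calc (A.a ⊗ₘ A.a) ≫ algMul Φ A
      = ((A.a ≫ Φ.T.η.app A.A) ⊗ₘ (A.a ≫ Φ.T.η.app A.A)) ≫ Φ.mul A.A ≫ A.a := by
        simp [algMul]
    _ = (Φ.T.η.app (Φ.T.obj A.A) ⊗ₘ Φ.T.η.app (Φ.T.obj A.A)) ≫
          ((Φ.T.map A.a ⊗ₘ Φ.T.map A.a) ≫ Φ.mul A.A) ≫ A.a := by
        rw [hnat]; simp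
    _ = (Φ.T.η.app (Φ.T.obj A.A) ⊗ₘ Φ.T.η.app (Φ.T.obj A.A)) ≫
          Φ.mul (Φ.T.obj A.A) ≫ Φ.T.μ.app A.A ≫ A.a := by
        rw [hT]; simp [A.assoc]
    _ = ((Φ.T.η.app (Φ.T.obj A.A) ≫ Φ.T.μ.app A.A) ⊗ₘ
          (Φ.T.η.app (Φ.T.obj A.A) ≫ Φ.T.μ.app A.A)) ≫ Φ.mul A.A ≫ A.a := by
        simp only [← tensorHom_comp_tensorHom_assoc, reassoc_of% hmu]
    _ = Φ.mul A.A ≫ A.a := by simp [Monad.right_unit]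

lemma commAlg (A : Φ.T.Algebra) : IsCommAlg (algMul Φ A) (algUnit Φ A) := by
  have km := key_mul Φ A
  have TAalg := Φ.ismod.commAlg A.A
  set ν := A.a with hν
  constructor
  · -- one_mul
    have e1 : IsSplitEpi (𝟙_ C ◁ ν) :=
      IsSplitEpi.mk' ⟨𝟙_ C ◁ Φ.T.η.app A.A, by
        rw [← MonoidalCategory.whiskerLeft_comp, A.unit, MonoidalCategory.whiskerLeft_id]⟩
    rw [← cancel_epi (𝟙_ C ◁ ν)]
    have h1 : (𝟙_ C ◁ ν) ≫ (algUnit Φ A ▷ A.A) =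
        (Φ.unit A.A ▷ Φ.T.obj A.A) ≫ (ν ⊗ₘ ν) := by
      simp [algUnit, ← id_tensorHom, ← tensorHom_id, tensorHom_comp_tensorHom]; rfl
    calc (𝟙_ C ◁ ν) ≫ (algUnit Φ A ▷ A.A) ≫ algMul Φ A
        = (Φ.unit A.A ▷ Φ.T.obj A.A) ≫ (ν ⊗ₘ ν) ≫ algMul Φ A := by
          rw [← Category.assoc, h1, Category.assoc]
      _ = (Φ.unit A.A ▷ Φ.T.obj A.A) ≫ Φ.mul A.A ≫ ν := by rw [km]
      _ = (λ_ (Φ.T.obj A.A)).hom ≫ ν := by rw [reassoc_of% TAalg.one_mul]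
      _ = (𝟙_ C ◁ ν) ≫ (λ_ A.A).hom := by rw [leftUnitor_naturality]
  · -- mul_one
    have e1 : IsSplitEpi (ν ▷ 𝟙_ C) :=
      IsSplitEpi.mk' ⟨Φ.T.η.app A.A ▷ 𝟙_ C, by
        rw [← MonoidalCategory.comp_whiskerRight, A.unit]; simp⟩
    rw [← cancel_epi (ν ▷ 𝟙_ C)]
    have h1 : (ν ▷ 𝟙_ C) ≫ (A.A ◁ algUnit Φ A) =
        (Φ.T.obj A.A ◁ Φ.unit A.A) ≫ (ν ⊗ₘ ν) := by
      simp [algUnit, ← id_tensorHom, ← tensorHom_id, tensorHom_comp_tensorHom]; rfl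
    calc (ν ▷ 𝟙_ C) ≫ (A.A ◁ algUnit Φ A) ≫ algMul Φ A
        = (Φ.T.obj A.A ◁ Φ.unit A.A) ≫ (ν ⊗ₘ ν) ≫ algMul Φ A := by
          rw [← Category.assoc, h1, Category.assoc]
      _ = (Φ.T.obj A.A ◁ Φ.unit A.A) ≫ Φ.mul A.A ≫ ν := by rw [km]
      _ = (ρ_ (Φ.T.obj A.A)).hom ≫ ν := by rw [reassoc_of% TAalg.mul_one]
      _ = (ν ▷ 𝟙_ C) ≫ (ρ_ A.A).hom := by rw [rightUnitor_naturality]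
  · -- mul_assoc
    have e1 : IsSplitEpi ((ν ⊗ₘ ν) ⊗ₘ ν) := IsSplitEpi.mk'
      ⟨(Φ.T.η.app A.A ⊗ₘ Φ.T.η.app A.A) ⊗ₘ Φ.T.η.app A.A, by
        rw [tensorHom_comp_tensorHom, tensorHom_comp_tensorHom, A.unit, id_tensorHom_id, id_tensorHom_id]⟩
    rw [← cancel_epi ((ν ⊗ₘ ν) ⊗ₘ ν)]
    have h1 : ((ν ⊗ₘ ν) ⊗ₘ ν) ≫ (algMul Φ A ▷ A.A) =
        (Φ.mul A.A ▷ Φ.T.obj A.A) ≫ (ν ⊗ₘ ν) := by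
      rw [← tensorHom_id, ← tensorHom_id, tensorHom_comp_tensorHom, tensorHom_comp_tensorHom, Category.comp_id,
        Category.id_comp, km]
    have h2 : (ν ⊗ₘ (ν ⊗ₘ ν)) ≫ (A.A ◁ algMul Φ A) =
        (Φ.T.obj A.A ◁ Φ.mul A.A) ≫ (ν ⊗ₘ ν) := by
      rw [← id_tensorHom, ← id_tensorHom, tensorHom_comp_tensorHom, tensorHom_comp_tensorHom, Category.comp_id,
        Category.id_comp, km]
    calc ((ν ⊗ₘ ν) ⊗ₘ ν) ≫ (algMul Φ A ▷ A.A) ≫ algMul Φ A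
        = (Φ.mul A.A ▷ Φ.T.obj A.A) ≫ (ν ⊗ₘ ν) ≫ algMul Φ A := by
          rw [← Category.assoc, h1, Category.assoc]
      _ = (Φ.mul A.A ▷ Φ.T.obj A.A) ≫ Φ.mul A.A ≫ ν := by rw [km]
      _ = (α_ _ _ _).hom ≫ (Φ.T.obj A.A ◁ Φ.mul A.A) ≫ Φ.mul A.A ≫ ν := by
          rw [reassoc_of% TAalg.mul_assoc]
      _ = (α_ _ _ _).hom ≫ (Φ.T.obj A.A ◁ Φ.mul A.A) ≫ (ν ⊗ₘ ν) ≫ algMul Φ A := by rw [km]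
      _ = (α_ _ _ _).hom ≫ (ν ⊗ₘ (ν ⊗ₘ ν)) ≫ (A.A ◁ algMul Φ A) ≫ algMul Φ A := by
          rw [← reassoc_of% h2]
      _ = ((ν ⊗ₘ ν) ⊗ₘ ν) ≫ (α_ _ _ _).hom ≫ (A.A ◁ algMul Φ A) ≫ algMul Φ A := by
          rw [associator_naturality_assoc]
  · -- mul_comm
    rw [algMul, ← BraidedCategory.braiding_naturality_assoc, reassoc_of% TAalg.mul_comm]

lemma algHom {A B : Φ.T.Algebra} (f : A ⟶ B) :
    IsAlgHom (algMul Φ A) (algUnit Φ A) (algMul Φ B) (algUnit Φ B) f.f := by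
  constructor
  · have hnat : f.f ≫ Φ.T.η.app B.A = Φ.T.η.app A.A ≫ Φ.T.map f.f := by
      simpa using Φ.T.η.naturality f.f
    have hT := (Φ.ismod.map_hom f.f).map_mul
    calc (f.f ⊗ₘ f.f) ≫ algMul Φ B
        = ((f.f ≫ Φ.T.η.app B.A) ⊗ₘ (f.f ≫ Φ.T.η.app B.A)) ≫ Φ.mul B.A ≫ B.a := by
          simp [algMul]
      _ = (Φ.T.η.app A.A ⊗ₘ Φ.T.η.app A.A) ≫ ((Φ.T.map f.f ⊗ₘ Φ.T.map f.f) ≫ Φ.mul B.A) ≫ B.a := by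
          rw [hnat]; simp
      _ = (Φ.T.η.app A.A ⊗ₘ Φ.T.η.app A.A) ≫ Φ.mul A.A ≫ Φ.T.map f.f ≫ B.a := by
          rw [hT]; simp
      _ = algMul Φ A ≫ f.f := by rw [f.h]; simp [algMul]
  · have := (Φ.ismod.map_hom f.f).map_one
    calc algUnit Φ A ≫ f.f = Φ.unit A.A ≫ A.a ≫ f.f := by simp [algUnit]
      _ = Φ.unit A.A ≫ Φ.T.map f.f ≫ B.a := by rw [← f.h]
      _ = algUnit Φ B := by rw [← Category.assoc, this, algUnit]

lemma freeCalc (X : C) :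
    algMul Φ (Φ.T.free.obj X) = Φ.mul X ∧ algUnit Φ (Φ.T.free.obj X) = Φ.unit X := by
  constructor
  · have hmu := (Φ.ismod.mu_hom X).map_mul
    show (Φ.T.η.app (Φ.T.obj X) ⊗ₘ Φ.T.η.app (Φ.T.obj X)) ≫ Φ.mul (Φ.T.obj X) ≫ Φ.T.μ.app X
        = Φ.mul X
    rw [← hmu, tensorHom_comp_tensorHom_assoc, Monad.left_unit]
    simp
  · show Φ.unit (Φ.T.obj X) ≫ Φ.T.μ.app X = Φ.unit X
    exact (Φ.ismod.mu_hom X).map_one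

def toCommMon : Φ.T.Algebra ⥤ CommMon C where
  obj A :=
    letI : MonObj A.A :=
        { one := algUnit Φ A
          mul := algMul Φ A
          one_mul := (commAlg Φ A).one_mul
          mul_one := (commAlg Φ A).mul_one
          mul_assoc := (commAlg Φ A).mul_assoc }
    { X := A.A
      comm := ⟨(commAlg Φ A).mul_comm⟩ }
  map f :=
    { hom :=
        { hom := f.f
          isMonHom_hom := ⟨(algHom Φ f).map_one, ((algHom Φ f).map_mul).symm⟩ } }
  map_id A := rfl
  map_comp f g := rfl

end Aux

/-- the induced commutative algebra structure on `T`-algebras, functoriality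
into commutative algebras, and the computation on free `T`-algebras. -/
theorem statement0 {C : Type u} [Category.{v} C] [MonoidalCategory C] [SymmetricCategory C]
    (Φ : AlgebraModality C) :
    (∀ A : Φ.T.Algebra, IsCommAlg (algMul Φ A) (algUnit Φ A)) ∧
    (∀ (A B : Φ.T.Algebra) (f : A ⟶ B),
      IsAlgHom (algMul Φ A) (algUnit Φ A) (algMul Φ B) (algUnit Φ B) f.f) ∧
    (∃ F : Φ.T.Algebra ⥤ CommMon C,
      (∀ A : Φ.T.Algebra,
        (F.obj A).X = A.A ∧ HEq (MonObj.mul (X := (F.obj A).X)) (algMul Φ A) ∧ HEq (MonObj.one (X := (F.obj A).X)) (algUnit Φ A)) ∧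
      ∀ (A B : Φ.T.Algebra) (f : A ⟶ B), HEq (F.map f).hom.hom f.f) ∧
    (∀ X : C,
      algMul Φ (Φ.T.free.obj X) = Φ.mul X ∧ algUnit Φ (Φ.T.free.obj X) = Φ.unit X) := by
  exact ⟨commAlg Φ, fun A B f => algHom Φ f,
    ⟨toCommMon Φ, fun A => ⟨rfl, HEq.rfl, HEq.rfl⟩, fun A B f => HEq.rfl⟩,
    freeCalc Φ⟩

end CodiffPaper
end

section
/- Let C be an additive symmetric monoidal category with finite coproducts and reflexive coequalizers, the latter preserved by the tensor product in each variable, and suppose the forgetful functor from the category Alg of commutative algebras in C to C has a left adjoint, with induced (monadic) symmetric algebra monad S. Then algebra modalities on C are in bijective correspondence with pairs (T, ψ) consisting of a monad T on C and a monad morphism ψ : S → T: a monad morphism ψ equips each TC with the commutative algebra structure of the S-algebra (TC, ψ_{TC};μ_C), yielding an algebra modality, and every algebra modality on T arises in this way from a unique monad morphism ψ : S → T. Under this correspondence, each component ψ_C : SC → TC is an algebra homomorphism, and ψ induces a functor F_ψ from T-algebras to S-algebras sending (A, ν) to (A, ψ_A;ν). -/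
open CategoryTheory CategoryTheory.Limits CategoryTheory.MonoidalCategory

universe v u

namespace CodiffPaper

variable {C : Type u} [Category.{v} C]

/-- The multiplication on `T X` induced by a monad morphism `ψ : S ⟶ T` from the
symmetric algebra monad `S`: the commutative algebra structure of the `S`-algebra
`(T X, ψ_{T X} ; μ_X)`. -/
def psiMul {C : Type u} [Category.{v} C] [MonoidalCategory C] [SymmetricCategory C]
    (F : C ⥤ CommMon C) (adj : F ⊣ CommMon.forget₂Mon C ⋙ Mon.forget C)
    {T : Monad C} (ψ : adj.toMonad ⟶ T) (X : C) :
    T.obj X ⊗ T.obj X ⟶ T.obj X :=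
  (adj.toMonad.η.app (T.obj X) ⊗ₘ adj.toMonad.η.app (T.obj X)) ≫
    MonObj.mul (X := (F.obj (T.obj X)).X) ≫ ψ.app (T.obj X) ≫ T.μ.app X

/-- The unit on `T X` induced by a monad morphism `ψ : S ⟶ T`. -/
def psiUnit {C : Type u} [Category.{v} C] [MonoidalCategory C] [SymmetricCategory C]
    (F : C ⥤ CommMon C) (adj : F ⊣ CommMon.forget₂Mon C ⋙ Mon.forget C)
    {T : Monad C} (ψ : adj.toMonad ⟶ T) (X : C) : 𝟙_ C ⟶ T.obj X :=
  MonObj.one (X := (F.obj (T.obj X)).X) ≫ ψ.app (T.obj X) ≫ T.μ.app X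

section Statement2Aux

set_option linter.unusedSectionVars false

variable {C : Type u} [Category.{v} C] [MonoidalCategory C] [SymmetricCategory C]
  (F : C ⥤ CommMon C) (adj : F ⊣ CommMon.forget₂Mon C ⋙ Mon.forget C)

/-- The multiplication of `S X`, typed over `adj.toMonad.obj X`. -/
def Smul (X : C) : adj.toMonad.obj X ⊗ adj.toMonad.obj X ⟶ adj.toMonad.obj X :=
  MonObj.mul (X := (F.obj X).X)

/-- The unit of `S X`, typed over `adj.toMonad.obj X`. -/
def Sone (X : C) : 𝟙_ C ⟶ adj.toMonad.obj X :=
  MonObj.one (X := (F.obj X).X)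

lemma split_cancel {A B Z : C} (p : A ⟶ B) (s : B ⟶ A) (hs : s ≫ p = 𝟙 B)
    {f g : B ⟶ Z} (h : p ≫ f = p ≫ g) : f = g := by
  calc f = s ≫ p ≫ f := by rw [← Category.assoc, hs, Category.id_comp]
  _ = s ≫ p ≫ g := by rw [h]
  _ = g := by rw [← Category.assoc, hs, Category.id_comp]

lemma S_map_mul {X Y : C} (f : X ⟶ Y) :
    (Smul F adj X) ≫ adj.toMonad.map f = (adj.toMonad.map f ⊗ₘ adj.toMonad.map f) ≫ (Smul F adj Y) :=
  IsMonHom.mul_hom (F.map f).hom.hom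

lemma S_map_one {X Y : C} (f : X ⟶ Y) :
    (Sone F adj X) ≫ adj.toMonad.map f = (Sone F adj Y) :=
  IsMonHom.one_hom (F.map f).hom.hom

lemma S_mu_mul (X : C) :
    (Smul F adj (adj.toMonad.obj X)) ≫ adj.toMonad.μ.app X =
      (adj.toMonad.μ.app X ⊗ₘ adj.toMonad.μ.app X) ≫ (Smul F adj X) :=
  IsMonHom.mul_hom (adj.counit.app (F.obj X)).hom.hom

lemma S_mu_one (X : C) :
    (Sone F adj (adj.toMonad.obj X)) ≫ adj.toMonad.μ.app X = (Sone F adj X) :=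
  IsMonHom.one_hom (adj.counit.app (F.obj X)).hom.hom

section
variable {T : Monad C} (ψ : adj.toMonad ⟶ T)

def nu (X : C) : adj.toMonad.obj (T.obj X) ⟶ T.obj X := ψ.app (T.obj X) ≫ T.μ.app X

lemma eta_nu (X : C) : adj.toMonad.η.app (T.obj X) ≫ nu F adj ψ X = 𝟙 _ := by
  rw [nu, ← Category.assoc, ψ.app_η, T.left_unit]

lemma Smap_nu {W X : C} (k : T.obj W ⟶ T.obj X)
    (hk : T.map k ≫ T.μ.app X = T.μ.app W ≫ k) :
    adj.toMonad.map k ≫ nu F adj ψ X = nu F adj ψ W ≫ k := by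
  rw [nu, nu, ← Category.assoc, ψ.naturality, Category.assoc, hk, Category.assoc]

lemma Snu_nu (X : C) :
    adj.toMonad.map (nu F adj ψ X) ≫ nu F adj ψ X
      = adj.toMonad.μ.app (T.obj X) ≫ nu F adj ψ X := by
  rw [nu, ← Category.assoc, ← Category.assoc, ψ.naturality, ψ.app_μ]
  simp only [Functor.map_comp, Category.assoc]
  rw [T.assoc]
  simp only [← Category.assoc]
  rw [← ψ.naturality]

lemma psiMul_eq (X : C) : psiMul F adj ψ X =
    (adj.toMonad.η.app (T.obj X) ⊗ₘ adj.toMonad.η.app (T.obj X)) ≫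
      (Smul F adj (T.obj X)) ≫ nu F adj ψ X := rfl

lemma psiUnit_eq (X : C) : psiUnit F adj ψ X = (Sone F adj (T.obj X)) ≫ nu F adj ψ X := rfl

lemma nu_mul (X : C) :
    (nu F adj ψ X ⊗ₘ nu F adj ψ X) ≫ psiMul F adj ψ X
      = (Smul F adj (T.obj X)) ≫ nu F adj ψ X := by
  have hη : nu F adj ψ X ≫ adj.toMonad.η.app (T.obj X)
      = adj.toMonad.η.app (adj.toMonad.obj (T.obj X)) ≫ adj.toMonad.map (nu F adj ψ X) := by
    exact adj.toMonad.η.naturality (nu F adj ψ X)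
  rw [psiMul_eq, ← Category.assoc, MonoidalCategory.tensorHom_comp_tensorHom, hη]
  rw [← MonoidalCategory.tensorHom_comp_tensorHom, Category.assoc, ← Category.assoc (adj.toMonad.map _ ⊗ₘ _),
    ← S_map_mul, Category.assoc, Snu_nu, ← Category.assoc (Smul F adj _),
    S_mu_mul, ← Category.assoc, ← Category.assoc, MonoidalCategory.tensorHom_comp_tensorHom,
    adj.toMonad.left_unit]
  simp
  erw [Category.id_comp]


lemma psi_commAlg (X : C) : IsCommAlg (psiMul F adj ψ X) (psiUnit F adj ψ X) := by
  set A := T.obj X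
  set ν := nu F adj ψ X with hν
  set η := adj.toMonad.η.app A with hη
  set mulF := (Smul F adj A) with hmulF
  set oneF := (Sone F adj A) with honeF
  have hmul : (ν ⊗ₘ ν) ≫ psiMul F adj ψ X = mulF ≫ ν := nu_mul F adj ψ X
  have hid : η ≫ ν = 𝟙 A := eta_nu F adj ψ X
  constructor
  · -- one_mul
    rw [← MonoidalCategory.tensorHom_id, psiUnit_eq]
    calc ((oneF ≫ ν) ⊗ₘ 𝟙 A) ≫ psiMul F adj ψ X
        = ((oneF ≫ ν) ⊗ₘ (η ≫ ν)) ≫ psiMul F adj ψ X := by rw [hid]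
      _ = (oneF ⊗ₘ η) ≫ (ν ⊗ₘ ν) ≫ psiMul F adj ψ X := by
          rw [← Category.assoc, MonoidalCategory.tensorHom_comp_tensorHom]
      _ = (oneF ⊗ₘ η) ≫ mulF ≫ ν := by rw [hmul]
      _ = ((𝟙 _ ≫ oneF) ⊗ₘ (η ≫ 𝟙 _)) ≫ mulF ≫ ν := by rw [Category.id_comp, Category.comp_id]
      _ = (𝟙 _ ⊗ₘ η) ≫ ((oneF ⊗ₘ 𝟙 _) ≫ mulF) ≫ ν := by
          rw [← MonoidalCategory.tensorHom_comp_tensorHom]; simp only [Category.assoc]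
      _ = (𝟙_ C ◁ η) ≫ ((oneF ▷ _) ≫ mulF) ≫ ν := by
          rw [MonoidalCategory.id_tensorHom, MonoidalCategory.tensorHom_id]
      _ = (𝟙_ C ◁ η) ≫ (λ_ _).hom ≫ ν := by
          rw [show (oneF ▷ adj.toMonad.obj A) ≫ mulF = (λ_ (adj.toMonad.obj A)).hom from
            MonObj.one_mul (F.obj A).X]
      _ = (λ_ A).hom ≫ η ≫ ν := by
          rw [← Category.assoc, MonoidalCategory.leftUnitor_naturality, Category.assoc]; rfl
      _ = (λ_ A).hom := by rw [hid, Category.comp_id]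
  · -- mul_one
    rw [← MonoidalCategory.id_tensorHom, psiUnit_eq]
    calc (𝟙 A ⊗ₘ (oneF ≫ ν)) ≫ psiMul F adj ψ X
        = ((η ≫ ν) ⊗ₘ (oneF ≫ ν)) ≫ psiMul F adj ψ X := by rw [hid]
      _ = (η ⊗ₘ oneF) ≫ (ν ⊗ₘ ν) ≫ psiMul F adj ψ X := by
          rw [← Category.assoc, MonoidalCategory.tensorHom_comp_tensorHom]
      _ = (η ⊗ₘ oneF) ≫ mulF ≫ ν := by rw [hmul]
      _ = ((η ≫ 𝟙 _) ⊗ₘ (𝟙 _ ≫ oneF)) ≫ mulF ≫ ν := by rw [Category.id_comp, Category.comp_id]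
      _ = (η ⊗ₘ 𝟙 _) ≫ ((𝟙 _ ⊗ₘ oneF) ≫ mulF) ≫ ν := by
          rw [← MonoidalCategory.tensorHom_comp_tensorHom]; simp only [Category.assoc]
      _ = (η ▷ 𝟙_ C) ≫ ((_ ◁ oneF) ≫ mulF) ≫ ν := by
          rw [MonoidalCategory.id_tensorHom, MonoidalCategory.tensorHom_id]
      _ = (η ▷ 𝟙_ C) ≫ (ρ_ _).hom ≫ ν := by
          rw [show (adj.toMonad.obj A ◁ oneF) ≫ mulF = (ρ_ (adj.toMonad.obj A)).hom from
            MonObj.mul_one (F.obj A).X]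
      _ = (ρ_ A).hom ≫ η ≫ ν := by
          rw [← Category.assoc, MonoidalCategory.rightUnitor_naturality, Category.assoc]; rfl
      _ = (ρ_ A).hom := by rw [hid, Category.comp_id]
  · -- mul_assoc
    apply split_cancel ((ν ⊗ₘ ν) ⊗ₘ ν) ((η ⊗ₘ η) ⊗ₘ η)
    · rw [MonoidalCategory.tensorHom_comp_tensorHom, MonoidalCategory.tensorHom_comp_tensorHom, hid,
        MonoidalCategory.id_tensorHom_id, MonoidalCategory.id_tensorHom_id]
    · calc ((ν ⊗ₘ ν) ⊗ₘ ν) ≫ (psiMul F adj ψ X ▷ A) ≫ psiMul F adj ψ X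
          = (((ν ⊗ₘ ν) ≫ psiMul F adj ψ X) ⊗ₘ (ν ≫ 𝟙 A)) ≫ psiMul F adj ψ X := by
            rw [← MonoidalCategory.tensorHom_comp_tensorHom, ← MonoidalCategory.tensorHom_id]
            simp only [Category.assoc]
        _ = ((mulF ≫ ν) ⊗ₘ (𝟙 _ ≫ ν)) ≫ psiMul F adj ψ X := by
            rw [hmul, Category.comp_id, Category.id_comp]
        _ = (mulF ⊗ₘ 𝟙 _) ≫ (ν ⊗ₘ ν) ≫ psiMul F adj ψ X := by
            rw [← MonoidalCategory.tensorHom_comp_tensorHom]; simp only [Category.assoc]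
        _ = (mulF ▷ adj.toMonad.obj A) ≫ mulF ≫ ν := by
            rw [hmul, MonoidalCategory.tensorHom_id]
        _ = (α_ _ _ _).hom ≫ (adj.toMonad.obj A ◁ mulF) ≫ mulF ≫ ν := by
            rw [reassoc_of% (show (mulF ▷ adj.toMonad.obj A) ≫ mulF =
              (α_ (adj.toMonad.obj A) (adj.toMonad.obj A) (adj.toMonad.obj A)).hom ≫
                (adj.toMonad.obj A ◁ mulF) ≫ mulF from MonObj.mul_assoc (F.obj A).X)]
        _ = (α_ _ _ _).hom ≫ (𝟙 _ ⊗ₘ mulF) ≫ (ν ⊗ₘ ν) ≫ psiMul F adj ψ X := by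
            rw [hmul, MonoidalCategory.id_tensorHom]
        _ = (α_ _ _ _).hom ≫ ((𝟙 _ ≫ ν) ⊗ₘ (mulF ≫ ν)) ≫ psiMul F adj ψ X := by
            rw [← MonoidalCategory.tensorHom_comp_tensorHom]; simp only [Category.assoc]
        _ = (α_ _ _ _).hom ≫ (ν ⊗ₘ ((ν ⊗ₘ ν) ≫ psiMul F adj ψ X)) ≫ psiMul F adj ψ X := by
            rw [hmul, Category.id_comp]
        _ = ((ν ⊗ₘ ν) ⊗ₘ ν) ≫ (α_ A A A).hom ≫ (A ◁ psiMul F adj ψ X) ≫ psiMul F adj ψ X := by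
            rw [MonoidalCategory.associator_naturality_assoc, ← MonoidalCategory.id_tensorHom]
            slice_rhs 2 3 => rw [MonoidalCategory.tensorHom_comp_tensorHom]
            rw [Category.comp_id]
  · -- mul_comm
    have hcomm : (β_ (adj.toMonad.obj A) (adj.toMonad.obj A)).hom ≫ mulF = mulF :=
      IsCommMonObj.mul_comm (F.obj A).X
    rw [psiMul_eq, ← Category.assoc, ← BraidedCategory.braiding_naturality,
      Category.assoc, reassoc_of% hcomm]

lemma isAlgHom_of {W X : C} (k : T.obj W ⟶ T.obj X)
    (hk : T.map k ≫ T.μ.app X = T.μ.app W ≫ k) :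
    IsAlgHom (psiMul F adj ψ W) (psiUnit F adj ψ W)
      (psiMul F adj ψ X) (psiUnit F adj ψ X) k := by
  have hS : adj.toMonad.map k ≫ nu F adj ψ X = nu F adj ψ W ≫ k := Smap_nu F adj ψ k hk
  have hη : k ≫ adj.toMonad.η.app (T.obj X)
      = adj.toMonad.η.app (T.obj W) ≫ adj.toMonad.map k := by
    simpa using adj.toMonad.η.naturality k
  constructor
  · rw [psiMul_eq, psiMul_eq]
    calc (k ⊗ₘ k) ≫ (adj.toMonad.η.app (T.obj X) ⊗ₘ adj.toMonad.η.app (T.obj X)) ≫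
          (Smul F adj (T.obj X)) ≫ nu F adj ψ X
        = ((k ≫ adj.toMonad.η.app (T.obj X)) ⊗ₘ (k ≫ adj.toMonad.η.app (T.obj X))) ≫
          (Smul F adj (T.obj X)) ≫ nu F adj ψ X := by
          rw [← Category.assoc, MonoidalCategory.tensorHom_comp_tensorHom]
      _ = (adj.toMonad.η.app (T.obj W) ⊗ₘ adj.toMonad.η.app (T.obj W)) ≫
          (adj.toMonad.map k ⊗ₘ adj.toMonad.map k) ≫ (Smul F adj (T.obj X)) ≫ nu F adj ψ X := by
          rw [hη, ← MonoidalCategory.tensorHom_comp_tensorHom]; simp only [Category.assoc]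
      _ = (adj.toMonad.η.app (T.obj W) ⊗ₘ adj.toMonad.η.app (T.obj W)) ≫
          (Smul F adj (T.obj W)) ≫ adj.toMonad.map k ≫ nu F adj ψ X := by
          rw [← reassoc_of% (S_map_mul F adj k)]
      _ = ((adj.toMonad.η.app (T.obj W) ⊗ₘ adj.toMonad.η.app (T.obj W)) ≫
          (Smul F adj (T.obj W)) ≫ nu F adj ψ W) ≫ k := by
          rw [hS]; simp only [Category.assoc]
  · rw [psiUnit_eq, psiUnit_eq, Category.assoc, ← hS, ← Category.assoc, S_map_one F adj k]

lemma psi_modality : IsAlgebraModality T (psiMul F adj ψ) (psiUnit F adj ψ) where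
  commAlg X := psi_commAlg F adj ψ X
  map_hom f := isAlgHom_of F adj ψ (T.map f) (T.μ.naturality f)
  mu_hom X := isAlgHom_of F adj ψ (T.μ.app X) (T.assoc X)

lemma psi_alg_hom (X : C) :
    IsAlgHom (Smul F adj X) (Sone F adj X) (psiMul F adj ψ X) (psiUnit F adj ψ X) (ψ.app X) := by
  have hη : ψ.app X ≫ adj.toMonad.η.app (T.obj X)
      = adj.toMonad.η.app (adj.toMonad.obj X) ≫ adj.toMonad.map (ψ.app X) := by
    simpa using adj.toMonad.η.naturality (ψ.app X)
  have hSψν : adj.toMonad.map (ψ.app X) ≫ nu F adj ψ X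
      = adj.toMonad.μ.app X ≫ ψ.app X := by
    rw [nu, ← Category.assoc, ← ψ.app_μ]
  constructor
  · rw [psiMul_eq]
    calc (ψ.app X ⊗ₘ ψ.app X) ≫ (adj.toMonad.η.app (T.obj X) ⊗ₘ adj.toMonad.η.app (T.obj X)) ≫
          (Smul F adj (T.obj X)) ≫ nu F adj ψ X
        = ((ψ.app X ≫ adj.toMonad.η.app (T.obj X)) ⊗ₘ (ψ.app X ≫ adj.toMonad.η.app (T.obj X))) ≫
          (Smul F adj (T.obj X)) ≫ nu F adj ψ X := by
          rw [← Category.assoc, MonoidalCategory.tensorHom_comp_tensorHom]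
      _ = (adj.toMonad.η.app (adj.toMonad.obj X) ⊗ₘ adj.toMonad.η.app (adj.toMonad.obj X)) ≫
          (adj.toMonad.map (ψ.app X) ⊗ₘ adj.toMonad.map (ψ.app X)) ≫
          (Smul F adj (T.obj X)) ≫ nu F adj ψ X := by
          rw [hη, ← MonoidalCategory.tensorHom_comp_tensorHom]; simp only [Category.assoc]
      _ = (adj.toMonad.η.app (adj.toMonad.obj X) ⊗ₘ adj.toMonad.η.app (adj.toMonad.obj X)) ≫
          (Smul F adj (adj.toMonad.obj X)) ≫ adj.toMonad.map (ψ.app X) ≫ nu F adj ψ X := by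
          rw [← reassoc_of% (S_map_mul F adj (ψ.app X))]
      _ = (adj.toMonad.η.app (adj.toMonad.obj X) ⊗ₘ adj.toMonad.η.app (adj.toMonad.obj X)) ≫
          (Smul F adj (adj.toMonad.obj X)) ≫ adj.toMonad.μ.app X ≫ ψ.app X := by
          rw [hSψν]
      _ = (adj.toMonad.η.app (adj.toMonad.obj X) ⊗ₘ adj.toMonad.η.app (adj.toMonad.obj X)) ≫
          (adj.toMonad.μ.app X ⊗ₘ adj.toMonad.μ.app X) ≫ (Smul F adj X) ≫ ψ.app X := by
          rw [reassoc_of% (S_mu_mul F adj X)]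
      _ = ((adj.toMonad.η.app (adj.toMonad.obj X) ≫ adj.toMonad.μ.app X) ⊗ₘ
            (adj.toMonad.η.app (adj.toMonad.obj X) ≫ adj.toMonad.μ.app X)) ≫
          (Smul F adj X) ≫ ψ.app X := by
          rw [← Category.assoc, MonoidalCategory.tensorHom_comp_tensorHom]
      _ = (Smul F adj X) ≫ ψ.app X := by
          rw [adj.toMonad.left_unit, MonoidalCategory.id_tensorHom_id, Category.id_comp]
  · rw [psiUnit_eq, ← S_mu_one F adj X, Category.assoc, ← hSψν, ← Category.assoc,
      S_map_one F adj (ψ.app X)]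

section Part2
variable (mul : ∀ X : C, T.obj X ⊗ T.obj X ⟶ T.obj X) (unit : ∀ X : C, 𝟙_ C ⟶ T.obj X)
  (hmod : IsAlgebraModality T mul unit)

/-- The commutative monoid object `T X` coming from an algebra modality. -/
def Malg (X : C) : CommMon C :=
  letI : MonObj (T.obj X) :=
    { one := unit X
      mul := mul X
      one_mul := (hmod.commAlg X).one_mul
      mul_one := (hmod.commAlg X).mul_one
      mul_assoc := (hmod.commAlg X).mul_assoc }
  { X := T.obj X
    comm := { mul_comm := (hmod.commAlg X).mul_comm } }

lemma hom_ext {X : C} {M : CommMon C} (a b : F.obj X ⟶ M)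
    (hab : adj.unit.app X ≫ a.hom.hom = adj.unit.app X ≫ b.hom.hom) : a.hom.hom = b.hom.hom := by
  suffices h : a = b by rw [h]
  apply (adj.homEquiv X M).injective
  rw [Adjunction.homEquiv_unit, Adjunction.homEquiv_unit]
  exact hab

/-- The canonical algebra map `F X ⟶ (T X, mul X, unit X)` adjoint to `η^T_X`. -/
def gee (X : C) : F.obj X ⟶ Malg mul unit hmod X :=
  (adj.homEquiv X (Malg mul unit hmod X)).symm (T.η.app X)

lemma gee_unit (X : C) :
    adj.unit.app X ≫ (gee F adj mul unit hmod X).hom.hom = T.η.app X := by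
  have h := (adj.homEquiv X (Malg mul unit hmod X)).apply_symm_apply (T.η.app X)
  rw [Adjunction.homEquiv_unit] at h
  exact h

/-- `T f` as a map of commutative monoid objects. -/
def tmapHom {X Y : C} (f : X ⟶ Y) : Malg mul unit hmod X ⟶ Malg mul unit hmod Y where
  hom :=
    { hom := T.map f
      isMonHom_hom :=
        { one_hom := (hmod.map_hom f).map_one
          mul_hom := (hmod.map_hom f).map_mul.symm } }

/-- `μ^T_X` as a map of commutative monoid objects. -/
def muHom (X : C) : Malg mul unit hmod (T.obj X) ⟶ Malg mul unit hmod X where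
  hom :=
    { hom := T.μ.app X
      isMonHom_hom :=
        { one_hom := (hmod.mu_hom X).map_one
          mul_hom := (hmod.mu_hom X).map_mul.symm } }

/-- The monad morphism `S ⟶ T` induced by an algebra modality. -/
def psi0 : adj.toMonad ⟶ T where
  app X := (gee F adj mul unit hmod X).hom.hom
  naturality X Y f := by
    have h1 : adj.unit.app X ≫ (F.map f ≫ gee F adj mul unit hmod Y).hom.hom
        = adj.unit.app X ≫ (gee F adj mul unit hmod X ≫ tmapHom mul unit hmod f).hom.hom := by
      show adj.unit.app X ≫ (F.map f).hom.hom ≫ (gee F adj mul unit hmod Y).hom.hom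
          = adj.unit.app X ≫ (gee F adj mul unit hmod X).hom.hom ≫ T.map f
      have h2 : f ≫ adj.unit.app Y = adj.unit.app X ≫ (F.map f).hom.hom := adj.unit.naturality f
      erw [← Category.assoc, ← h2, Category.assoc, gee_unit]
      erw [← Category.assoc, gee_unit]
      exact T.η.naturality f
    exact hom_ext F adj _ _ h1
  app_η X := by
    have := gee_unit F adj mul unit hmod X
    exact this
  app_μ X := by
    have h1 : adj.unit.app (adj.toMonad.obj X) ≫
          (adj.counit.app (F.obj X) ≫ gee F adj mul unit hmod X).hom.hom
        = adj.unit.app (adj.toMonad.obj X) ≫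
          (F.map (gee F adj mul unit hmod X).hom.hom ≫ gee F adj mul unit hmod (T.obj X) ≫
            muHom mul unit hmod X).hom.hom := by
      show adj.unit.app (adj.toMonad.obj X) ≫
            (adj.counit.app (F.obj X)).hom.hom ≫ (gee F adj mul unit hmod X).hom.hom
          = adj.unit.app (adj.toMonad.obj X) ≫ (F.map (gee F adj mul unit hmod X).hom.hom).hom.hom ≫
            (gee F adj mul unit hmod (T.obj X)).hom.hom ≫ T.μ.app X
      have hl : adj.unit.app (adj.toMonad.obj X) ≫ (adj.counit.app (F.obj X)).hom.hom = 𝟙 _ :=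
        adj.toMonad.left_unit X
      have h2 : (gee F adj mul unit hmod X).hom.hom ≫ adj.unit.app (T.obj X)
          = adj.unit.app (adj.toMonad.obj X) ≫ (F.map (gee F adj mul unit hmod X).hom.hom).hom.hom :=
        adj.unit.naturality (gee F adj mul unit hmod X).hom.hom
      have hg : ∀ {Z : C} (h : T.obj (T.obj X) ⟶ Z), adj.unit.app (T.obj X) ≫
          (gee F adj mul unit hmod (T.obj X)).hom.hom ≫ h = T.η.app (T.obj X) ≫ h := fun h => by
        erw [← Category.assoc, gee_unit]; rfl
      erw [← Category.assoc, hl, Category.id_comp, ← Category.assoc, ← h2, Category.assoc,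
        hg, T.left_unit]
      exact (Category.comp_id _).symm
    have h3 : (adj.counit.app (F.obj X)).hom.hom ≫ (gee F adj mul unit hmod X).hom.hom
        = (F.map (gee F adj mul unit hmod X).hom.hom).hom.hom ≫
          (gee F adj mul unit hmod (T.obj X)).hom.hom ≫ T.μ.app X := hom_ext F adj _ _ h1
    show adj.toMonad.μ.app X ≫ (gee F adj mul unit hmod X).hom.hom = _
    erw [Category.assoc]
    exact h3

lemma psi0_mul (X : C) : psiMul F adj (psi0 F adj mul unit hmod) X = mul X := by
  have gm : Smul F adj (T.obj X) ≫ (gee F adj mul unit hmod (T.obj X)).hom.hom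
      = ((gee F adj mul unit hmod (T.obj X)).hom.hom ⊗ₘ (gee F adj mul unit hmod (T.obj X)).hom.hom) ≫
        mul (T.obj X) :=
    IsMonHom.mul_hom (self := (gee F adj mul unit hmod (T.obj X)).hom.isMonHom_hom) _
  show (adj.toMonad.η.app (T.obj X) ⊗ₘ adj.toMonad.η.app (T.obj X)) ≫
      (Smul F adj (T.obj X)) ≫ (gee F adj mul unit hmod (T.obj X)).hom.hom ≫ T.μ.app X = mul X
  calc (adj.toMonad.η.app (T.obj X) ⊗ₘ adj.toMonad.η.app (T.obj X)) ≫
      (Smul F adj (T.obj X)) ≫ (gee F adj mul unit hmod (T.obj X)).hom.hom ≫ T.μ.app X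
      = (adj.toMonad.η.app (T.obj X) ⊗ₘ adj.toMonad.η.app (T.obj X)) ≫
        ((gee F adj mul unit hmod (T.obj X)).hom.hom ⊗ₘ (gee F adj mul unit hmod (T.obj X)).hom.hom) ≫
        mul (T.obj X) ≫ T.μ.app X := by
          erw [← Category.assoc (Smul F adj (T.obj X)), gm, Category.assoc
            ((gee F adj mul unit hmod (T.obj X)).hom.hom ⊗ₘ (gee F adj mul unit hmod (T.obj X)).hom.hom)]; rfl
    _ = ((adj.unit.app (T.obj X) ≫ (gee F adj mul unit hmod (T.obj X)).hom.hom) ⊗ₘ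
          (adj.unit.app (T.obj X) ≫ (gee F adj mul unit hmod (T.obj X)).hom.hom)) ≫
        mul (T.obj X) ≫ T.μ.app X := by
        erw [← Category.assoc, MonoidalCategory.tensorHom_comp_tensorHom]; rfl
    _ = (T.η.app (T.obj X) ⊗ₘ T.η.app (T.obj X)) ≫ mul (T.obj X) ≫ T.μ.app X := by
        erw [gee_unit]; rfl
    _ = (T.η.app (T.obj X) ⊗ₘ T.η.app (T.obj X)) ≫ (T.μ.app X ⊗ₘ T.μ.app X) ≫ mul X := by
        rw [← (hmod.mu_hom X).map_mul]
    _ = ((T.η.app (T.obj X) ≫ T.μ.app X) ⊗ₘ (T.η.app (T.obj X) ≫ T.μ.app X)) ≫ mul X := by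
        rw [← Category.assoc, MonoidalCategory.tensorHom_comp_tensorHom]
    _ = mul X := by rw [T.left_unit, MonoidalCategory.id_tensorHom_id, Category.id_comp]

lemma psi0_unit (X : C) : psiUnit F adj (psi0 F adj mul unit hmod) X = unit X := by
  show (Sone F adj (T.obj X)) ≫ (gee F adj mul unit hmod (T.obj X)).hom.hom ≫ T.μ.app X = unit X
  have go : Sone F adj (T.obj X) ≫ (gee F adj mul unit hmod (T.obj X)).hom.hom = unit (T.obj X) :=
    IsMonHom.one_hom (self := (gee F adj mul unit hmod (T.obj X)).hom.isMonHom_hom) _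
  erw [← Category.assoc, go]
  exact (hmod.mu_hom X).map_one

lemma psi0_unique (ψ' : adj.toMonad ⟶ T)
    (hψ : ∀ X : C, psiMul F adj ψ' X = mul X ∧ psiUnit F adj ψ' X = unit X) :
    ψ' = psi0 F adj mul unit hmod := by
  apply MonadHom.ext'
  funext X
  have hh := psi_alg_hom F adj ψ' X
  rw [(hψ X).1, (hψ X).2] at hh
  let a : F.obj X ⟶ Malg mul unit hmod X :=
    { hom :=
        { hom := ψ'.app X
          isMonHom_hom :=
            { one_hom := hh.map_one
              mul_hom := hh.map_mul.symm } } }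
  have h1 : adj.unit.app X ≫ a.hom.hom = adj.unit.app X ≫ (gee F adj mul unit hmod X).hom.hom := by
    show adj.unit.app X ≫ ψ'.app X = _
    rw [gee_unit]
    exact ψ'.app_η X
  exact hom_ext F adj a (gee F adj mul unit hmod X) h1

end Part2

end
end Statement2Aux

/-- algebra modalities on a monad `T` are in bijective correspondence with
monad morphisms `ψ : S ⟶ T` from the symmetric algebra monad `S`. -/
theorem statement2 {C : Type u} [Category.{v} C] [MonoidalCategory C] [SymmetricCategory C]
    [AdditiveMonoidal C] [HasFiniteCoproducts C] [HasReflexiveCoequalizers C]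
    (hpres : TensorPreservesReflCoeq C)
    (F : C ⥤ CommMon C) (adj : F ⊣ CommMon.forget₂Mon C ⋙ Mon.forget C)
    (T : Monad C) :
    (∀ ψ : adj.toMonad ⟶ T,
      -- `ψ` yields an algebra modality on `T`
      IsAlgebraModality T (psiMul F adj ψ) (psiUnit F adj ψ) ∧
      -- each component `ψ_X : S X ⟶ T X` is an algebra homomorphism
      (∀ X : C,
        IsAlgHom (MonObj.mul (X := (F.obj X).X)) (MonObj.one (X := (F.obj X).X)) (psiMul F adj ψ X) (psiUnit F adj ψ X)
          (ψ.app X)) ∧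
      -- `ψ` induces a functor from `T`-algebras to `S`-algebras, `(A, ν) ↦ (A, ψ_A ; ν)`
      (∃ G : T.Algebra ⥤ adj.toMonad.Algebra,
        ∀ A : T.Algebra, (G.obj A).A = A.A ∧ HEq (G.obj A).a (ψ.app A.A ≫ A.a))) ∧
    -- every algebra modality on `T` arises from a unique monad morphism `ψ : S ⟶ T`
    (∀ (mul : ∀ X : C, T.obj X ⊗ T.obj X ⟶ T.obj X) (unit : ∀ X : C, 𝟙_ C ⟶ T.obj X),
      IsAlgebraModality T mul unit →
      ∃! ψ : adj.toMonad ⟶ T,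
        ∀ X : C, psiMul F adj ψ X = mul X ∧ psiUnit F adj ψ X = unit X) := by
  constructor
  · intro ψ
    exact ⟨psi_modality F adj ψ, fun X => psi_alg_hom F adj ψ X,
      ⟨Monad.algebraFunctorOfMonadHom ψ, fun A => ⟨rfl, HEq.rfl⟩⟩⟩
  · intro mul unit hmod
    exact ⟨psi0 F adj mul unit hmod,
      fun X => ⟨psi0_mul F adj mul unit hmod X, psi0_unit F adj mul unit hmod X⟩,
      fun ψ' h' => psi0_unique F adj mul unit hmod ψ' h'⟩

end CodiffPaper
end

section
/- Let C be a codifferential category with finite coproducts (hence finite biproducts, by additivity). Let (A, ν) be a T-algebra and M a module over the commutative algebra induced on A. Define β₁ = T(π₁);ν : T(A⊕M) → A and β₂ = d_{T(A⊕M)};(T(π₁) ⊗ π₂);(ν ⊗ 1_M);•_M : T(A⊕M) → M. Then β = ⟨β₁, β₂⟩ : T(A⊕M) → A⊕M is a T-algebra structure on A⊕M, i.e. η_{A⊕M};β = 1_{A⊕M} and μ_{A⊕M};β = T(β);β. -/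
open CategoryTheory CategoryTheory.Limits CategoryTheory.MonoidalCategory

universe v u

namespace CodiffPaper

variable {C : Type u} [Category.{v} C]

section AuxProof

variable {C : Type u} [Category.{v} C] [MonoidalCategory C] [SymmetricCategory C]
    [AdditiveMonoidal C]

/-- The structure map of a `T`-algebra is an algebra homomorphism for the induced algebra. -/
lemma nu_algHom (D : Codifferential C) (A : D.T.Algebra) :
    (A.a ⊗ₘ A.a) ≫ algMul D.toAlgebraModality A = D.mul A.A ≫ A.a := by
  have hη : A.a ≫ D.T.η.app A.A = D.T.η.app (D.T.obj A.A) ≫ D.T.map A.a := by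
    simpa using D.T.η.naturality A.a
  have h1 : (D.T.map A.a ⊗ₘ D.T.map A.a) ≫ D.mul A.A = D.mul (D.T.obj A.A) ≫ D.T.map A.a :=
    (D.ismod.map_hom A.a).map_mul
  have h2 : (D.T.μ.app A.A ⊗ₘ D.T.μ.app A.A) ≫ D.mul A.A = D.mul (D.T.obj A.A) ≫ D.T.μ.app A.A :=
    (D.ismod.mu_hom A.A).map_mul
  calc (A.a ⊗ₘ A.a) ≫ algMul D.toAlgebraModality A
      = ((A.a ≫ D.T.η.app A.A) ⊗ₘ (A.a ≫ D.T.η.app A.A)) ≫ D.mul A.A ≫ A.a := by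
        rw [algMul, ← tensorHom_comp_tensorHom]; simp [Category.assoc]
    _ = (D.T.η.app (D.T.obj A.A) ⊗ₘ D.T.η.app (D.T.obj A.A)) ≫
          ((D.T.map A.a ⊗ₘ D.T.map A.a) ≫ D.mul A.A) ≫ A.a := by
        rw [hη, ← tensorHom_comp_tensorHom]; simp [Category.assoc]
    _ = (D.T.η.app (D.T.obj A.A) ⊗ₘ D.T.η.app (D.T.obj A.A)) ≫
          D.mul (D.T.obj A.A) ≫ D.T.map A.a ≫ A.a := by rw [h1]; simp [Category.assoc]
    _ = (D.T.η.app (D.T.obj A.A) ⊗ₘ D.T.η.app (D.T.obj A.A)) ≫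
          D.mul (D.T.obj A.A) ≫ D.T.μ.app A.A ≫ A.a := by rw [← A.assoc]
    _ = (D.T.η.app (D.T.obj A.A) ⊗ₘ D.T.η.app (D.T.obj A.A)) ≫
          ((D.T.μ.app A.A ⊗ₘ D.T.μ.app A.A) ≫ D.mul A.A) ≫ A.a := by rw [h2]; simp
    _ = ((D.T.η.app (D.T.obj A.A) ≫ D.T.μ.app A.A) ⊗ₘ
          (D.T.η.app (D.T.obj A.A) ≫ D.T.μ.app A.A)) ≫ D.mul A.A ≫ A.a := by
        rw [← tensorHom_comp_tensorHom]; simp [Category.assoc]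
    _ = D.mul A.A ≫ A.a := by rw [D.T.left_unit]; simp

end AuxProof

/-- for a `T`-algebra `(A, ν)` and a module `M` over its induced algebra,
`β = ⟨β₁, β₂⟩ : T(A ⊕ M) ⟶ A ⊕ M` is a `T`-algebra structure on `A ⊕ M`. -/
theorem statement4 {C : Type u} [Category.{v} C] [MonoidalCategory C] [SymmetricCategory C]
    [AdditiveMonoidal C] [HasBinaryBiproducts C]
    (D : Codifferential C) (A : D.T.Algebra) {M : C} (act : A.A ⊗ M ⟶ M)
    (hact : IsModule (algMul D.toAlgebraModality A) (algUnit D.toAlgebraModality A) act) :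
    (D.T.η.app (A.A ⊞ M) ≫ Wbeta D A act = 𝟙 (A.A ⊞ M)) ∧
    (D.T.μ.app (A.A ⊞ M) ≫ Wbeta D A act = D.T.map (Wbeta D A act) ≫ Wbeta D A act) := by
  set X := A.A ⊞ M with hX
  -- fuse `(T fst ⊗ₘ snd) ≫ (ν ⊗ₘ 𝟙)` into a single tensor
  have hfuse : ((D.T.map (biprod.fst : X ⟶ A.A)) ⊗ₘ (biprod.snd : X ⟶ M)) ≫ (A.a ⊗ₘ 𝟙 M)
      = ((D.T.map biprod.fst ≫ A.a) ⊗ₘ (biprod.snd : X ⟶ M)) := by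
    rw [tensorHom_comp_tensorHom, Category.comp_id]
  have hb2 : Wbeta2 D A act
      = D.d X ≫ ((D.T.map biprod.fst ≫ A.a) ⊗ₘ (biprod.snd : X ⟶ M)) ≫ act := by
    rw [Wbeta2, ← hfuse]; simp [Category.assoc]; rfl
  constructor
  · -- unit law
    apply biprod.hom_ext
    · have h : (biprod.fst : X ⟶ A.A) ≫ D.T.η.app A.A = D.T.η.app X ≫ D.T.map biprod.fst := by
        simpa using D.T.η.naturality (biprod.fst : X ⟶ A.A)
      simp only [Wbeta, Category.assoc, biprod.lift_fst, Category.id_comp]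
      rw [← Category.assoc, ← h, Category.assoc, A.unit, Category.comp_id]
      simp
    · simp only [Wbeta, Category.assoc, biprod.lift_snd, Category.id_comp]
      rw [hb2, reassoc_of% (D.iscodiff.d3 X)]
      have h1 : ((D.unit X) ▷ X) ≫ ((D.T.map biprod.fst ≫ A.a) ⊗ₘ (biprod.snd : X ⟶ M))
          = (𝟙_ C ◁ (biprod.snd : X ⟶ M)) ≫ ((algUnit D.toAlgebraModality A) ▷ M) := by
        rw [← tensorHom_id, ← id_tensorHom, ← tensorHom_id, tensorHom_comp_tensorHom, tensorHom_comp_tensorHom]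
        simp only [Category.id_comp, Category.comp_id]
        rw [← Category.assoc, (D.ismod.map_hom (biprod.fst : X ⟶ A.A)).map_one, algUnit]
      rw [reassoc_of% h1, hact.one_act, leftUnitor_naturality]
      simp
  · -- multiplication law
    have hμnat : D.T.μ.app X ≫ D.T.map (biprod.fst : X ⟶ A.A)
        = D.T.map (D.T.map biprod.fst) ≫ D.T.μ.app A.A := by
      simpa using (D.T.μ.naturality (biprod.fst : X ⟶ A.A)).symm
    -- μ ≫ β₁ = T β₁ ≫ ν
    have hβ1 : D.T.μ.app X ≫ D.T.map (biprod.fst : X ⟶ A.A) ≫ A.a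
        = D.T.map (D.T.map biprod.fst ≫ A.a) ≫ A.a := by
      rw [← Category.assoc, hμnat, Category.assoc, A.assoc, D.T.map_comp]
      simp [Category.assoc]
    apply biprod.hom_ext
    · -- first components
      have e4 : Wbeta D A act ≫ (biprod.fst : X ⟶ A.A) = D.T.map biprod.fst ≫ A.a := by
        simp [Wbeta]
      rw [Category.assoc, Category.assoc, e4, hβ1, ← Category.assoc, ← D.T.map_comp, e4]
    · -- second components
      have e3' : Wbeta D A act ≫ (biprod.snd : X ⟶ M) = Wbeta2 D A act := by simp [Wbeta]
      rw [Category.assoc, Category.assoc, e3']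
      -- LHS via chain rule (d4)
      have lhs : D.T.μ.app X ≫ Wbeta2 D A act
          = D.d (D.T.obj X) ≫
              ((D.T.map (D.T.map biprod.fst ≫ A.a) ≫ A.a) ⊗ₘ Wbeta2 D A act) ≫ act := by
        conv_lhs => rw [hb2, ← Category.assoc, D.iscodiff.d4 X]
        have step2 : ((D.mul X) ▷ X) ≫ ((D.T.map biprod.fst ≫ A.a) ⊗ₘ (biprod.snd : X ⟶ M))
            = (((D.T.map biprod.fst ≫ A.a) ⊗ₘ (D.T.map biprod.fst ≫ A.a)) ⊗ₘ
                (biprod.snd : X ⟶ M)) ≫ ((algMul D.toAlgebraModality A) ▷ M) := by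
          have hm : D.mul X ≫ D.T.map (biprod.fst : X ⟶ A.A)
              = (D.T.map biprod.fst ⊗ₘ D.T.map biprod.fst) ≫ D.mul A.A :=
            ((D.ismod.map_hom (biprod.fst : X ⟶ A.A)).map_mul).symm
          have e1 : D.mul X ≫ D.T.map (biprod.fst : X ⟶ A.A) ≫ A.a
              = ((D.T.map biprod.fst ≫ A.a) ⊗ₘ (D.T.map biprod.fst ≫ A.a)) ≫
                  algMul D.toAlgebraModality A := by
            rw [← Category.assoc, hm, Category.assoc, ← nu_algHom D A, tensorHom_comp_tensorHom_assoc]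
          calc (D.mul X ▷ X) ≫ ((D.T.map biprod.fst ≫ A.a) ⊗ₘ (biprod.snd : X ⟶ M))
              = (D.mul X ≫ D.T.map biprod.fst ≫ A.a) ⊗ₘ ((𝟙 X) ≫ biprod.snd) := by
                rw [← tensorHom_id, tensorHom_comp_tensorHom]
            _ = (((D.T.map biprod.fst ≫ A.a) ⊗ₘ (D.T.map biprod.fst ≫ A.a)) ≫
                  algMul D.toAlgebraModality A) ⊗ₘ (biprod.snd ≫ 𝟙 M) := by
                rw [e1, Category.id_comp, Category.comp_id]
            _ = (((D.T.map biprod.fst ≫ A.a) ⊗ₘ (D.T.map biprod.fst ≫ A.a)) ⊗ₘ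
                  (biprod.snd : X ⟶ M)) ≫ ((algMul D.toAlgebraModality A) ▷ M) := by
                rw [← tensorHom_comp_tensorHom, tensorHom_id]
        calc (D.d (D.T.obj X) ≫ (D.T.μ.app X ⊗ₘ D.d X) ≫ (α_ _ _ _).inv ≫ (D.mul X ▷ X)) ≫
              ((D.T.map biprod.fst ≫ A.a) ⊗ₘ (biprod.snd : X ⟶ M)) ≫ act
            = D.d (D.T.obj X) ≫ (D.T.μ.app X ⊗ₘ D.d X) ≫ (α_ _ _ _).inv ≫
                ((((D.T.map biprod.fst ≫ A.a) ⊗ₘ (D.T.map biprod.fst ≫ A.a)) ⊗ₘ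
                  (biprod.snd : X ⟶ M)) ≫ ((algMul D.toAlgebraModality A) ▷ M)) ≫ act := by
              simp only [Category.assoc]
              rw [reassoc_of% step2]
          _ = D.d (D.T.obj X) ≫ (D.T.μ.app X ⊗ₘ D.d X) ≫
                ((D.T.map biprod.fst ≫ A.a) ⊗ₘ
                  ((D.T.map biprod.fst ≫ A.a) ⊗ₘ (biprod.snd : X ⟶ M))) ≫ (α_ _ _ _).inv ≫
                ((algMul D.toAlgebraModality A) ▷ M) ≫ act := by
              simp only [Category.assoc]
              rw [← associator_inv_naturality_assoc]
          _ = D.d (D.T.obj X) ≫ (D.T.μ.app X ⊗ₘ D.d X) ≫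
                ((D.T.map biprod.fst ≫ A.a) ⊗ₘ
                  ((D.T.map biprod.fst ≫ A.a) ⊗ₘ (biprod.snd : X ⟶ M))) ≫
                (A.A ◁ act) ≫ act := by
              rw [hact.mul_act, Iso.inv_hom_id_assoc]

          _ = D.d (D.T.obj X) ≫
                ((D.T.μ.app X ≫ D.T.map biprod.fst ≫ A.a) ⊗ₘ
                  (D.d X ≫ ((D.T.map biprod.fst ≫ A.a) ⊗ₘ (biprod.snd : X ⟶ M)) ≫ act)) ≫
                act := by
              rw [← id_tensorHom, tensorHom_comp_tensorHom_assoc, tensorHom_comp_tensorHom_assoc]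
              simp [Category.assoc]
          _ = D.d (D.T.obj X) ≫
              ((D.T.map (D.T.map biprod.fst ≫ A.a) ≫ A.a) ⊗ₘ Wbeta2 D A act) ≫ act := by
              rw [hβ1, hb2]
      -- RHS via naturality of d
      have rhs : D.T.map (Wbeta D A act) ≫ Wbeta2 D A act
          = D.d (D.T.obj X) ≫
              ((D.T.map (D.T.map biprod.fst ≫ A.a) ≫ A.a) ⊗ₘ Wbeta2 D A act) ≫ act := by
        have e2 : D.T.map (Wbeta D A act) ≫ D.T.map (biprod.fst : X ⟶ A.A) ≫ A.a
            = D.T.map (D.T.map biprod.fst ≫ A.a) ≫ A.a := by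
          rw [← Category.assoc, ← D.T.map_comp]
          simp [Wbeta]
        have e3 : Wbeta D A act ≫ (biprod.snd : X ⟶ M) = Wbeta2 D A act := by
          simp [Wbeta]
        conv_lhs => rw [hb2, ← Category.assoc, D.iscodiff.d_natural (Wbeta D A act)]
        rw [Category.assoc, tensorHom_comp_tensorHom_assoc, e3, e2]
      rw [lhs, rhs]

end CodiffPaper
end

section
/- Let C be a codifferential category with finite coproducts, (A, ν) a T-algebra, and M a module over the induced algebra A. Then the commutative algebra structure induced (via the assignment of Theorem 2.13) by the T-algebra W(A,M) on A⊕M coincides with the infinitesimal extension algebra structure: its multiplication m_{W(A,M)} : (A⊕M) ⊗ (A⊕M) → A⊕M has first component (π₁ ⊗ π₁);m_A and second component (1 + c);(π₁ ⊗ π₂);•_M, where c is the symmetry of (A⊕M) ⊗ (A⊕M). -/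
open CategoryTheory CategoryTheory.Limits CategoryTheory.MonoidalCategory

universe v u

namespace CodiffPaper

variable {C : Type u} [Category.{v} C]

/-- the commutative algebra induced by the `T`-algebra `W(A,M)` is the
infinitesimal extension of `A` by `M`. -/
theorem statement6 {C : Type u} [Category.{v} C] [MonoidalCategory C] [SymmetricCategory C]
    [AdditiveMonoidal C] [HasBinaryBiproducts C]
    (D : Codifferential C) (A : D.T.Algebra) {M : C} (act : A.A ⊗ M ⟶ M)
    (hact : IsModule (algMul D.toAlgebraModality A) (algUnit D.toAlgebraModality A) act) :
    (((D.T.η.app (A.A ⊞ M) ⊗ₘ D.T.η.app (A.A ⊞ M)) ≫ D.mul (A.A ⊞ M) ≫ Wbeta D A act) ≫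
          biprod.fst
        = ((biprod.fst ⊗ₘ biprod.fst : (A.A ⊞ M) ⊗ (A.A ⊞ M) ⟶ A.A ⊗ A.A)) ≫ algMul D.toAlgebraModality A) ∧
    (((D.T.η.app (A.A ⊞ M) ⊗ₘ D.T.η.app (A.A ⊞ M)) ≫ D.mul (A.A ⊞ M) ≫ Wbeta D A act) ≫
          biprod.snd
        = (𝟙 ((A.A ⊞ M) ⊗ (A.A ⊞ M)) + (β_ (A.A ⊞ M) (A.A ⊞ M)).hom) ≫
            ((biprod.fst ⊗ₘ biprod.snd : (A.A ⊞ M) ⊗ (A.A ⊞ M) ⟶ A.A ⊗ M)) ≫ act) := by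
  set X : C := A.A ⊞ M with hX
  set p1 : X ⟶ A.A := biprod.fst with hp1
  set p2 : X ⟶ M := biprod.snd with hp2
  set η : X ⟶ D.T.obj X := D.T.η.app X with hη
  set m : D.T.obj X ⊗ D.T.obj X ⟶ D.T.obj X := D.mul X with hm
  set e : 𝟙_ C ⟶ D.T.obj X := D.unit X with he
  set dX : D.T.obj X ⟶ D.T.obj X ⊗ X := D.d X with hdX
  set f : D.T.obj X ⟶ A.A := D.T.map p1 ≫ A.a with hf
  -- naturality of η at p1
  have hnat : p1 ≫ D.T.η.app A.A = η ≫ D.T.map p1 := by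
    simpa using D.T.η.naturality p1
  -- η ≫ f = p1
  have hηf : η ≫ f = p1 := by
    rw [hf, ← Category.assoc, ← hnat, Category.assoc, A.unit, Category.comp_id]
  -- T.map p1 is an algebra homomorphism
  have hμ : (D.T.map p1 ⊗ₘ D.T.map p1) ≫ D.mul A.A = m ≫ D.T.map p1 :=
    (D.iscodiff.ismod.map_hom p1).map_mul
  -- collapse (T.map p1 ⊗ p2) ≫ (A.a ⊗ₘ 𝟙 M) into f ⊗ p2
  have hcoll : (D.T.map p1 ⊗ₘ p2) ≫ (A.a ⊗ₘ 𝟙 M) = (f ⊗ₘ p2) := by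
    rw [tensorHom_comp_tensorHom, Category.comp_id, hf]
  constructor
  · -- first component
    show ((η ⊗ₘ η) ≫ m ≫ Wbeta D A act) ≫ p1 = (p1 ⊗ₘ p1) ≫ algMul D.toAlgebraModality A
    have : Wbeta D A act ≫ p1 = D.T.map p1 ≫ A.a := biprod.lift_fst _ _
    have hμ' : m ≫ D.T.map p1 ≫ A.a = (D.T.map p1 ⊗ₘ D.T.map p1) ≫ D.mul A.A ≫ A.a := by
      rw [← Category.assoc, ← hμ, Category.assoc]
    rw [Category.assoc, Category.assoc, this, hμ', ← Category.assoc, tensorHom_comp_tensorHom,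
      ← hnat, ← tensorHom_comp_tensorHom, Category.assoc, algMul]
  · -- second component
    show ((η ⊗ₘ η) ≫ m ≫ Wbeta D A act) ≫ p2 = _
    have hW2 : Wbeta D A act ≫ p2 = dX ≫ (f ⊗ₘ p2) ≫ act := by
      rw [Wbeta, hp2, biprod.lift_snd, Wbeta2, ← hcoll]
      simp [Category.assoc]
      rfl
    have hd3 : η ≫ dX = (λ_ X).inv ≫ (e ▷ X) := D.iscodiff.d3 X
    have hone_mul : (e ▷ D.T.obj X) ≫ m = (λ_ (D.T.obj X)).hom :=
      (D.iscodiff.ismod.commAlg X).one_mul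
    have hmul_one : (D.T.obj X ◁ e) ≫ m = (ρ_ (D.T.obj X)).hom :=
      (D.iscodiff.ismod.commAlg X).mul_one
    have hfinal : (η ▷ X) ≫ (f ⊗ₘ p2) ≫ act = (p1 ⊗ₘ p2) ≫ act := by
      rw [tensorHom_def f p2]
      simp only [← Category.assoc]
      rw [← comp_whiskerRight, hηf, ← MonoidalCategory.tensorHom_def]
    -- Claim A : the first Leibniz term gives (p1 ⊗ₘ p2) ≫ act
    have hA : (η ⊗ₘ η) ≫
        ((D.T.obj X ◁ dX) ≫ (α_ (D.T.obj X) (D.T.obj X) X).inv ≫ (m ▷ X)) ≫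
          ((f ⊗ₘ p2) ≫ act) = (p1 ⊗ₘ p2) ≫ act := by
      rw [tensorHom_def η η]
      simp only [Category.assoc]
      rw [← MonoidalCategory.whiskerLeft_comp_assoc, hd3,
        MonoidalCategory.whiskerLeft_comp_assoc,
        associator_inv_naturality_middle_assoc,
        ← comp_whiskerRight_assoc, hmul_one]
      have hstr : (D.T.obj X ◁ (λ_ X).inv) ≫ (α_ (D.T.obj X) (𝟙_ C) X).inv ≫
          ((ρ_ (D.T.obj X)).hom ▷ X) = 𝟙 _ := by
        coherence
      slice_lhs 2 4 => rw [hstr]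
      rw [Category.id_comp, hfinal]
    -- Claim B : the second Leibniz term gives β ≫ (p1 ⊗ₘ p2) ≫ act
    have hB : (η ⊗ₘ η) ≫
        ((dX ▷ D.T.obj X) ≫ (α_ (D.T.obj X) X (D.T.obj X)).hom ≫
          (D.T.obj X ◁ (β_ X (D.T.obj X)).hom) ≫ (α_ (D.T.obj X) (D.T.obj X) X).inv ≫
            (m ▷ X)) ≫ ((f ⊗ₘ p2) ≫ act) = (β_ X X).hom ≫ (p1 ⊗ₘ p2) ≫ act := by
      rw [tensorHom_def' η η]
      simp only [Category.assoc]
      rw [← comp_whiskerRight_assoc, hd3, comp_whiskerRight_assoc,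
        whisker_exchange_assoc, whisker_exchange_assoc,
        associator_naturality_right_assoc,
        ← MonoidalCategory.whiskerLeft_comp_assoc,
        BraidedCategory.braiding_naturality_right,
        MonoidalCategory.whiskerLeft_comp_assoc,
        associator_inv_naturality_middle_assoc]
      -- goal: (λ⁻¹▷X) ≫ (e▷X▷X) ≫ α ≫ (TX◁β) ≫ α⁻¹ ≫ ((TX◁η)▷X) ≫ (m▷X) ≫ (f⊗p2) ≫ act
      rw [associator_naturality_left_assoc e, ← whisker_exchange_assoc,
        associator_inv_naturality_left_assoc, ← comp_whiskerRight_assoc (e ▷ X),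
        ← whisker_exchange, ← comp_whiskerRight_assoc, Category.assoc, hone_mul,
        MonoidalCategory.leftUnitor_naturality, comp_whiskerRight_assoc]
      -- structural core
      slice_lhs 1 2 => rw [← MonoidalCategory.leftUnitor_tensor_inv]
      simp only [Category.assoc]
      rw [← MonoidalCategory.leftUnitor_inv_naturality_assoc]
      have hstr2 : (λ_ (X ⊗ X)).inv ≫ (α_ (𝟙_ C) X X).inv ≫ ((λ_ X).hom ▷ X) = 𝟙 _ := by
        coherence
      slice_lhs 2 4 => rw [hstr2]
      simp only [Category.id_comp, Category.assoc]
      rw [hfinal]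
    calc ((η ⊗ₘ η) ≫ m ≫ Wbeta D A act) ≫ p2
        = (η ⊗ₘ η) ≫ (m ≫ dX) ≫ ((f ⊗ₘ p2) ≫ act) := by
          rw [Category.assoc, Category.assoc, hW2]; simp only [Category.assoc]
      _ = (p1 ⊗ₘ p2) ≫ act + (β_ X X).hom ≫ (p1 ⊗ₘ p2) ≫ act := by
          rw [D.iscodiff.d2 X, CMonEnriched.add_comp, CMonEnriched.comp_add, hA, hB]
      _ = (𝟙 (X ⊗ X) + (β_ X X).hom) ≫ (p1 ⊗ₘ p2) ≫ act := by
          rw [CMonEnriched.add_comp, Category.id_comp]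

end CodiffPaper
end

section
/- Let C be a codifferential category with finite coproducts, (A, a) a T-algebra, and M, N modules over the induced algebra A. If h : M → N is a morphism of A-modules, then 1_A ⊕ h : A⊕M → A⊕N is a morphism of T-algebras W(A,M) → W(A,N). -/
open CategoryTheory CategoryTheory.Limits CategoryTheory.MonoidalCategory

universe v u

namespace CodiffPaper

variable {C : Type u} [Category.{v} C]

/-- if `h : M ⟶ N` is a morphism of `A`-modules then
`1_A ⊕ h : A ⊕ M ⟶ A ⊕ N` is a morphism of `T`-algebras `W(A,M) ⟶ W(A,N)`. -/
theorem statement7 {C : Type u} [Category.{v} C] [MonoidalCategory C] [SymmetricCategory C]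
    [AdditiveMonoidal C] [HasBinaryBiproducts C]
    (D : Codifferential C) (A : D.T.Algebra) {M N : C}
    (actM : A.A ⊗ M ⟶ M) (actN : A.A ⊗ N ⟶ N)
    (hM : IsModule (algMul D.toAlgebraModality A) (algUnit D.toAlgebraModality A) actM)
    (hN : IsModule (algMul D.toAlgebraModality A) (algUnit D.toAlgebraModality A) actN)
    (h : M ⟶ N) (hlin : IsModuleMap actM actN h) :
    D.T.map (biprod.map (𝟙 A.A) h) ≫ Wbeta D A actN
      = Wbeta D A actM ≫ biprod.map (𝟙 A.A) h := by
  apply biprod.hom_ext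
  · simp only [Wbeta, Category.assoc, biprod.lift_fst, biprod.map_fst, ← Functor.map_comp_assoc,
      biprod.lift_fst_assoc, Category.comp_id]
  · simp only [Wbeta, Category.assoc, biprod.lift_snd, biprod.map_snd, biprod.lift_snd_assoc,
      Wbeta2]
    rw [reassoc_of% D.iscodiff.d_natural]
    rw [MonoidalCategory.tensorHom_comp_tensorHom_assoc, ← Functor.map_comp, biprod.map_fst,
      Category.comp_id, biprod.map_snd]
    rw [MonoidalCategory.tensorHom_comp_tensorHom_assoc (D.T.map biprod.fst) (biprod.snd ≫ h) A.a (𝟙 N),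
      Category.assoc, Category.comp_id]
    rw [MonoidalCategory.tensorHom_comp_tensorHom_assoc (D.T.map biprod.fst) biprod.snd A.a (𝟙 M),
      Category.comp_id]
    have h2 : ((D.T.map biprod.fst ≫ A.a) ⊗ₘ (biprod.snd ≫ h) :
        D.T.obj (A.A ⊞ M) ⊗ (A.A ⊞ M) ⟶ A.A ⊗ N)
        = ((D.T.map biprod.fst ≫ A.a) ⊗ₘ biprod.snd) ≫ (A.A ◁ h) := by
      rw [← MonoidalCategory.id_tensorHom, MonoidalCategory.tensorHom_comp_tensorHom, Category.comp_id]
    rw [h2, Category.assoc, ← hlin]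

end CodiffPaper
end

section
/- Let C be a codifferential category with finite coproducts, (A, ν) a T-algebra, and M a module over the induced algebra A. A morphism ∂ : A → M is a T-derivation if and only if ν;∂ = d_{TA};(ν ⊗ ∂);•_M : TA → M (the chain-rule equation). -/
open CategoryTheory CategoryTheory.Limits CategoryTheory.MonoidalCategory

universe v u

namespace CodiffPaper

variable {C : Type u} [Category.{v} C]

/-- `der : A ⟶ M` is a `T`-derivation iff the chain-rule equation
`ν ; der = d_{TA} ; (ν ⊗ der) ; •` holds. -/
theorem statement9 {C : Type u} [Category.{v} C] [MonoidalCategory C] [SymmetricCategory C]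
    [AdditiveMonoidal C] [HasBinaryBiproducts C]
    (D : Codifferential C) (A : D.T.Algebra) {M : C} (act : A.A ⊗ M ⟶ M)
    (hact : IsModule (algMul D.toAlgebraModality A) (algUnit D.toAlgebraModality A) act)
    (der : A.A ⟶ M) :
    (D.T.map (biprod.lift (𝟙 A.A) der) ≫ Wbeta D A act = A.a ≫ biprod.lift (𝟙 A.A) der) ↔
    (A.a ≫ der = D.d A.A ≫ (A.a ⊗ₘ der) ≫ act) := by
  have key : D.T.map (biprod.lift (𝟙 A.A) der) ≫ Wbeta2 D A act
      = D.d A.A ≫ (A.a ⊗ₘ der) ≫ act := by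
    simp only [Wbeta2]
    rw [← Category.assoc, D.iscodiff.d_natural]
    simp only [Category.assoc]
    rw [← Category.assoc (D.T.map _ ⊗ₘ _), tensorHom_comp_tensorHom, ← D.T.map_comp,
      biprod.lift_fst, biprod.lift_snd, D.T.map_id]
    rw [← Category.assoc (𝟙 _ ⊗ₘ der), tensorHom_comp_tensorHom]
    simp
  constructor
  · intro h
    have h2 := congrArg (· ≫ biprod.snd) h
    simp only [Category.assoc, Wbeta, biprod.lift_snd] at h2
    rw [key] at h2
    exact h2.symm
  · intro h
    apply biprod.hom_ext
    · simp only [Wbeta, Category.assoc, biprod.lift_fst]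
      rw [← Category.assoc, ← D.T.map_comp, biprod.lift_fst, D.T.map_id,
        Category.id_comp, Category.comp_id]
    · simp only [Wbeta, Category.assoc, biprod.lift_snd]
      rw [key, ← h]

end CodiffPaper
end

section
/- Let C be a codifferential category. For every object C, the deriving transform d_{TC} : TC → TC ⊗ C is a universal T-derivation on the free T-algebra (TC, μ_C): for every module M over the algebra TC and every T-derivation ∂ : TC → M there exists a unique TC-linear morphism ∂# : TC ⊗ C → M such that d_{TC};∂# = ∂. In other words, TC ⊗ C is a module of Kähler T-differentials for (TC, μ_C). -/
open CategoryTheory CategoryTheory.Limits CategoryTheory.MonoidalCategory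

universe v u

namespace CodiffPaper

variable {C : Type u} [Category.{v} C]

/-- in a codifferential category the deriving transform
`d_{TC} : TC ⟶ TC ⊗ C` is a universal `T`-derivation on the free `T`-algebra `(TC, μ_C)`:
`TC ⊗ C` is a module of Kähler `T`-differentials. -/
theorem statement11 {C : Type u} [Category.{v} C] [MonoidalCategory C] [SymmetricCategory C]
    [AdditiveMonoidal C] (D : Codifferential C) (X : C) {M : C}
    (act : D.T.obj X ⊗ M ⟶ M) (hact : IsModule (D.mul X) (D.unit X) act)
    (der : D.T.obj X ⟶ M)
    (hder : D.d (D.T.obj X) ≫ (D.T.μ.app X ⊗ₘ der) ≫ act = D.T.μ.app X ≫ der) :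
    ∃! h : D.T.obj X ⊗ X ⟶ M,
      IsModuleMap (freeAct (D.mul X) X) act h ∧ D.d X ≫ h = der := by
  have hcomm := D.iscodiff.ismod.commAlg X
  -- the retraction: (TX ◁ (η ≫ d)) ≫ freeAct = 𝟙
  have hretr : (D.T.obj X ◁ (D.T.η.app X ≫ D.d X)) ≫ freeAct (D.mul X) X
      = 𝟙 (D.T.obj X ⊗ X) := by
    rw [D.iscodiff.d3 X, freeAct, MonoidalCategory.whiskerLeft_comp]
    have h2 : (D.T.obj X ◁ (D.unit X ▷ X)) ≫ (α_ (D.T.obj X) (D.T.obj X) X).inv =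
        (α_ (D.T.obj X) (𝟙_ C) X).inv ≫ ((D.T.obj X ◁ D.unit X) ▷ X) := by
      simp
    slice_lhs 2 3 => rw [h2]
    have h3 : ((D.T.obj X ◁ D.unit X) ▷ X) ≫ (D.mul X ▷ X) = ((ρ_ (D.T.obj X)).hom ▷ X) := by
      rw [← MonoidalCategory.comp_whiskerRight, hcomm.mul_one]
    slice_lhs 3 4 => rw [h3]
    simp
  -- h0 is a module map
  have key : (D.T.obj X ◁ act) ≫ act =
      (α_ (D.T.obj X) (D.T.obj X) M).inv ≫ (D.mul X ▷ M) ≫ act := by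
    rw [hact.mul_act]; simp
  have hmodmap : IsModuleMap (freeAct (D.mul X) X) act
      ((D.T.obj X ◁ (D.T.η.app X ≫ der)) ≫ act) := by
    rw [IsModuleMap, freeAct]
    symm
    calc (D.T.obj X ◁ ((D.T.obj X ◁ (D.T.η.app X ≫ der)) ≫ act)) ≫ act
        = (D.T.obj X ◁ (D.T.obj X ◁ (D.T.η.app X ≫ der))) ≫ (D.T.obj X ◁ act) ≫ act := by
          rw [MonoidalCategory.whiskerLeft_comp]; simp
      _ = (D.T.obj X ◁ (D.T.obj X ◁ (D.T.η.app X ≫ der))) ≫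
            (α_ (D.T.obj X) (D.T.obj X) M).inv ≫ (D.mul X ▷ M) ≫ act := by rw [key]
      _ = (α_ (D.T.obj X) (D.T.obj X) X).inv ≫
            ((D.T.obj X ⊗ D.T.obj X) ◁ (D.T.η.app X ≫ der)) ≫ (D.mul X ▷ M) ≫ act := by
          rw [MonoidalCategory.associator_inv_naturality_right_assoc]; rfl
      _ = ((α_ (D.T.obj X) (D.T.obj X) X).inv ≫ (D.mul X ▷ X)) ≫
            (D.T.obj X ◁ (D.T.η.app X ≫ der)) ≫ act := by
          rw [MonoidalCategory.whisker_exchange_assoc]; simp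
  -- d ≫ h0 = der
  have hfact : D.d X ≫ (D.T.obj X ◁ (D.T.η.app X ≫ der)) ≫ act = der := by
    have hnat := D.iscodiff.d_natural (D.T.η.app X)
    simp only [Functor.id_obj] at hnat
    have e1 : (D.T.obj X ◁ (D.T.η.app X ≫ der)) =
        (D.T.map (D.T.η.app X) ⊗ₘ D.T.η.app X) ≫ (D.T.μ.app X ⊗ₘ der) := by
      rw [MonoidalCategory.tensorHom_comp_tensorHom, Monad.right_unit, MonoidalCategory.id_tensorHom]; rfl
    rw [e1]
    slice_lhs 1 2 => rw [← hnat]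
    slice_lhs 2 4 => rw [hder]
    simp [Monad.right_unit]
  refine ⟨(D.T.obj X ◁ (D.T.η.app X ≫ der)) ≫ act, ⟨hmodmap, hfact⟩, ?_⟩
  rintro h ⟨hmod, hd⟩
  have : h = (D.T.obj X ◁ (D.T.η.app X ≫ D.d X)) ≫ freeAct (D.mul X) X ≫ h := by
    rw [← Category.assoc, hretr]; simp
  rw [this, hmod]
  rw [← Category.assoc, ← MonoidalCategory.whiskerLeft_comp]
  rw [Category.assoc, hd]

end CodiffPaper
end

section
/- Let C be a codifferential category with finite coproducts, let (A, a) and (B, b) be T-algebras, let M be a module over the induced algebra B, and let g : A → B be a T-algebra homomorphism. Then g ⊕ 1_M : A⊕M → B⊕M is a morphism of T-algebras W(A, M_A) → W(B, M), where M_A is the A-module obtained from M by restriction of scalars along the induced algebra homomorphism g. -/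
open CategoryTheory CategoryTheory.Limits CategoryTheory.MonoidalCategory

universe v u

namespace CodiffPaper

variable {C : Type u} [Category.{v} C]

/-- for a `T`-algebra homomorphism `g : A ⟶ B` and a `B`-module `M`,
`g ⊕ 1_M` is a morphism of `T`-algebras `W(A, M_A) ⟶ W(B, M)`. -/
theorem statement12 {C : Type u} [Category.{v} C] [MonoidalCategory C] [SymmetricCategory C]
    [AdditiveMonoidal C] [HasBinaryBiproducts C]
    (D : Codifferential C) (A B : D.T.Algebra) (g : A ⟶ B) {M : C} (act : B.A ⊗ M ⟶ M)
    (hact : IsModule (algMul D.toAlgebraModality B) (algUnit D.toAlgebraModality B) act) :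
    D.T.map (biprod.map g.f (𝟙 M)) ≫ Wbeta D B act
      = Wbeta D A ((g.f ▷ M) ≫ act) ≫ biprod.map g.f (𝟙 M) := by
  have hg : D.T.map g.f ≫ B.a = A.a ≫ g.f := g.h
  apply biprod.hom_ext
  · -- first component
    simp only [Wbeta, Category.assoc, biprod.lift_fst, biprod.map_fst]
    rw [← Category.assoc, ← D.T.map_comp, biprod.map_fst, D.T.map_comp,
      Category.assoc, hg, ← Category.assoc, ← Category.assoc, biprod.lift_fst]
  · -- second component
    simp only [Wbeta, Category.assoc, biprod.lift_snd, biprod.map_snd, Category.comp_id]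
    show D.T.map (biprod.map g.f (𝟙 M)) ≫ Wbeta2 D B act = Wbeta2 D A ((g.f ▷ M) ≫ act)
    unfold Wbeta2
    rw [← Category.assoc, D.iscodiff.d_natural (biprod.map g.f (𝟙 M))]
    have h1 : (D.T.map (biprod.map g.f (𝟙 M)) ⊗ₘ biprod.map g.f (𝟙 M)) ≫
        (D.T.map biprod.fst ⊗ₘ biprod.snd)
        = (D.T.map biprod.fst ⊗ₘ biprod.snd) ≫ (D.T.map g.f ⊗ₘ 𝟙 M) := by
      rw [tensorHom_comp_tensorHom, tensorHom_comp_tensorHom, ← D.T.map_comp, ← D.T.map_comp,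
        biprod.map_fst, biprod.map_snd]
    have h2 : (D.T.map g.f ⊗ₘ 𝟙 M) ≫ (B.a ⊗ₘ 𝟙 M) = (A.a ⊗ₘ 𝟙 M) ≫ (g.f ▷ M) := by
      simp only [tensorHom_id, ← comp_whiskerRight, hg]
    simp only [Category.assoc]
    rw [reassoc_of% h1, reassoc_of% h2]

end CodiffPaper
end

section
/- Let C be a codifferential category with finite coproducts, let (A, a) and (B, b) be T-algebras, let M be a module over the induced algebra B, and let g : A → B be a T-algebra homomorphism. If ∂ : A → M is a morphism such that ⟨g, ∂⟩ : A → B⊕M is a T-algebra homomorphism (A, a) → W(B, M), then ∂ : A → M_A is a T-derivation, where M_A is the restriction of scalars of M along g. -/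
open CategoryTheory CategoryTheory.Limits CategoryTheory.MonoidalCategory

universe v u

namespace CodiffPaper

variable {C : Type u} [Category.{v} C]

/-- if `⟨g, der⟩ : A ⟶ B ⊕ M` is a `T`-algebra homomorphism
`(A,a) ⟶ W(B,M)` then `der : A ⟶ M_A` is a `T`-derivation. -/
theorem statement13 {C : Type u} [Category.{v} C] [MonoidalCategory C] [SymmetricCategory C]
    [AdditiveMonoidal C] [HasBinaryBiproducts C]
    (D : Codifferential C) (A B : D.T.Algebra) (g : A ⟶ B) {M : C} (act : B.A ⊗ M ⟶ M)
    (hact : IsModule (algMul D.toAlgebraModality B) (algUnit D.toAlgebraModality B) act)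
    (der : A.A ⟶ M)
    (hg : D.T.map (biprod.lift g.f der) ≫ Wbeta D B act = A.a ≫ biprod.lift g.f der) :
    D.T.map (biprod.lift (𝟙 A.A) der) ≫ Wbeta D A ((g.f ▷ M) ≫ act)
      = A.a ≫ biprod.lift (𝟙 A.A) der := by
  have key : ∀ {N : C} (b : D.T.obj N ⟶ N) (h : A.A ⟶ N) (act' : N ⊗ M ⟶ M),
      D.T.map (biprod.lift h der) ≫ D.d (N ⊞ M) ≫ (D.T.map biprod.fst ⊗ₘ biprod.snd)
          ≫ (b ⊗ₘ 𝟙 M) ≫ act'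
        = D.d A.A ≫ ((D.T.map h ≫ b) ⊗ₘ der) ≫ act' := by
    intro N b h act'
    rw [← Category.assoc, D.iscodiff.d_natural (biprod.lift h der)]
    simp only [Category.assoc, tensorHom_comp_tensorHom_assoc, ← D.T.map_comp,
      biprod.lift_fst, biprod.lift_snd, Category.comp_id]
    rw [← Category.assoc (D.T.map (biprod.lift h der)), ← D.T.map_comp, biprod.lift_fst]
  have hg2 : D.T.map (biprod.lift g.f der) ≫ Wbeta2 D B act = A.a ≫ der := by
    have h := hg =≫ biprod.snd
    simpa [Wbeta, Category.assoc] using h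
  apply biprod.hom_ext
  · simp only [Wbeta, Category.assoc, biprod.lift_fst, Category.comp_id]
    rw [← Category.assoc, ← D.T.map_comp, biprod.lift_fst, D.T.map_id, Category.id_comp]
  · simp only [Wbeta, Category.assoc, biprod.lift_snd]
    have lhs : D.T.map (biprod.lift (𝟙 A.A) der) ≫ Wbeta2 D A ((g.f ▷ M) ≫ act)
        = D.d A.A ≫ ((A.a ≫ g.f) ⊗ₘ der) ≫ act := by
      rw [Wbeta2, key A.a (𝟙 A.A) ((g.f ▷ M) ≫ act), D.T.map_id, Category.id_comp]
      simp only [← Category.assoc]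
      congr 1
      rw [Category.assoc, ← tensorHom_id, tensorHom_comp_tensorHom, Category.comp_id]
    have rhs : D.T.map (biprod.lift g.f der) ≫ Wbeta2 D B act
        = D.d A.A ≫ ((A.a ≫ g.f) ⊗ₘ der) ≫ act := by
      rw [Wbeta2, key B.a g.f act, g.h]
    rw [lhs, ← rhs, hg2]

end CodiffPaper
end

section
/- Let C be a codifferential category with finite coproducts, g : A → B a morphism of T-algebras, and N a module over the induced algebra B. Then the commutative square in the category of T-algebras with top edge g ⊕ 1_N : W(A, N_A) → W(B, N), left edge π₁ : W(A, N_A) → A, right edge π₁ : W(B, N) → B, and bottom edge g : A → B, is a pullback square. Consequently, the functor W : Mod_T → (C^T)^→ sending (A, M) to π₁ : W(A,M) → A and (g, h) : (A,M) → (B,N) to the square with top g ⊕ h, which satisfies cod ∘ W = (projection Mod_T → C^T), is a fibred functor over C^T. -/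
open CategoryTheory CategoryTheory.Limits CategoryTheory.MonoidalCategory

universe v u

namespace CodiffPaper

variable {C : Type u} [Category.{v} C]

/-- the square with top `g ⊕ 1_N : W(A, N_A) ⟶ W(B, N)`, sides the
projections `π₁`, and bottom `g : A ⟶ B` is a pullback in the category of `T`-algebras
(stated elementwise: it commutes, and it has the universal property of a pullback with
respect to every `T`-algebra `Q`). -/
theorem statement14 {C : Type u} [Category.{v} C] [MonoidalCategory C] [SymmetricCategory C]
    [AdditiveMonoidal C] [HasBinaryBiproducts C]
    (D : Codifferential C) (A B : D.T.Algebra) (g : A ⟶ B) {N : C} (act : B.A ⊗ N ⟶ N)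
    (hact : IsModule (algMul D.toAlgebraModality B) (algUnit D.toAlgebraModality B) act) :
    (biprod.map g.f (𝟙 N) ≫ biprod.fst = biprod.fst ≫ g.f) ∧
    (∀ (Q : D.T.Algebra) (v : Q.A ⟶ A.A) (u : Q.A ⟶ B.A ⊞ N),
      IsTAlgebraHom D.T Q.a A.a v →
      IsTAlgebraHom D.T Q.a (Wbeta D B act) u →
      v ≫ g.f = u ≫ biprod.fst →
      ∃! t : Q.A ⟶ A.A ⊞ N,
        IsTAlgebraHom D.T Q.a (Wbeta D A ((g.f ▷ N) ≫ act)) t ∧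
        t ≫ biprod.map g.f (𝟙 N) = u ∧ t ≫ biprod.fst = v) := by
  constructor
  · simp
  intro Q v u hv hu hcomm
  set t : Q.A ⟶ A.A ⊞ N := biprod.lift v (u ≫ biprod.snd) with ht
  have hufst : D.T.map u ≫ D.T.map biprod.fst ≫ B.a = Q.a ≫ u ≫ biprod.fst := by
    have := congrArg (· ≫ (biprod.fst : B.A ⊞ N ⟶ B.A)) hu
    simpa [Wbeta, Category.assoc] using this
  have husnd : D.T.map u ≫ Wbeta2 D B act = Q.a ≫ u ≫ biprod.snd := by
    have := congrArg (· ≫ (biprod.snd : B.A ⊞ N ⟶ N)) hu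
    simpa [Wbeta, Category.assoc] using this
  have htalg : IsTAlgebraHom D.T Q.a (Wbeta D A ((g.f ▷ N) ≫ act)) t := by
    unfold IsTAlgebraHom Wbeta
    apply biprod.hom_ext
    · simp only [Category.assoc, biprod.lift_fst]
      rw [← Category.assoc, ← D.T.map_comp]
      simp only [ht, biprod.lift_fst]
      exact hv.trans (by simp)
    · simp only [Category.assoc, biprod.lift_snd]
      -- key computation for the second component
      have hnat := D.iscodiff.d_natural t
      unfold Wbeta2
      calc D.T.map t ≫ D.d (A.A ⊞ N) ≫ (D.T.map biprod.fst ⊗ₘ biprod.snd) ≫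
              (A.a ⊗ₘ 𝟙 N) ≫ (g.f ▷ N) ≫ act
          = D.d Q.A ≫ ((D.T.map t ⊗ₘ t) ≫ (D.T.map biprod.fst ⊗ₘ biprod.snd) ≫
              (A.a ⊗ₘ 𝟙 N) ≫ (g.f ⊗ₘ 𝟙 N)) ≫ act := by
            rw [← MonoidalCategory.tensorHom_id]
            rw [← Category.assoc, hnat]
            simp [Category.assoc]
        _ = D.d Q.A ≫ ((D.T.map u ⊗ₘ u) ≫ (D.T.map biprod.fst ⊗ₘ biprod.snd) ≫
              (B.a ⊗ₘ 𝟙 N)) ≫ act := by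
            have hleft : D.T.map t ≫ D.T.map biprod.fst ≫ A.a ≫ g.f
                = D.T.map u ≫ D.T.map biprod.fst ≫ B.a := by
              rw [← Category.assoc, ← D.T.map_comp]
              simp only [ht, biprod.lift_fst]
              rw [← Category.assoc, hv, Category.assoc, hcomm, ← hufst]
            have hright : t ≫ biprod.snd = u ≫ biprod.snd := by simp [ht]
            congr 2
            rw [MonoidalCategory.tensorHom_comp_tensorHom, MonoidalCategory.tensorHom_comp_tensorHom,
              MonoidalCategory.tensorHom_comp_tensorHom, MonoidalCategory.tensorHom_comp_tensorHom,
              MonoidalCategory.tensorHom_comp_tensorHom]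
            simp only [Category.comp_id, Category.assoc]
            rw [hleft, hright]
        _ = D.T.map u ≫ Wbeta2 D B act := by
            unfold Wbeta2
            rw [reassoc_of% (D.iscodiff.d_natural u)]
            simp [Category.assoc]
        _ = Q.a ≫ u ≫ biprod.snd := husnd
      simp [ht]
  refine ⟨t, ⟨htalg, ?_, by simp [ht]⟩, ?_⟩
  · apply biprod.hom_ext <;> simp [ht, ← hcomm]
  · rintro t' ⟨-, ht'u, ht'v⟩
    apply biprod.hom_ext
    · simp [ht, ht'v]
    · have := congrArg (· ≫ (biprod.snd : B.A ⊞ N ⟶ N)) ht'u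
      simp only [Category.assoc, biprod.map_snd, Category.comp_id] at this
      simp [ht, this]

end CodiffPaper
end
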